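/- arXiv:1607.08851 — 6 statements merged into one kernel-verified Lean document; each statement's English description precedes it below -/
import Mathlib

section
/- Let d ≥ 1, ε > 0, h > 0, A ∈ C²(ℝ; ℝ^d), and u₀ ∈ L^∞(ℝ^d) with u₀(x) ≥ ū > 0 for a.e. x. Let f_h be the time-discrete kinetic scheme with threshold ε, time step h and data u₀. Then for every n ≥ 0 and a.e. x ∈ ℝ^d, f_h(x,nh,v) = 1 for a.e. v ∈ [0,ū]; in particular [0,ū] ⊂ supp f_h(x,nh,·) and ∫ v f_h(x,nh,v) dv ≥ ū²/2 for a.e. x. -/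
open MeasureTheory Real Filter Topology

noncomputable section

/-- Signed indicator `χ_u`: `1_{[0,u]}` if `u ≥ 0`, `-1_{[u,0]}` if `u < 0`. -/
def chiFn (u : ℝ) (v : ℝ) : ℝ :=
  if 0 ≤ u then Set.indicator (Set.Icc 0 u) (fun _ => (1 : ℝ)) v
  else -Set.indicator (Set.Icc u 0) (fun _ => (1 : ℝ)) v

/-- Equilibrium projection `Π_f := χ_{∫ f}`. -/
def equil (f : ℝ → ℝ) : ℝ → ℝ := chiFn (∫ v, f v)

/-- Deviation functional `D(f)`; by Lean's convention `x/0 = 0`, `D(f) = 0`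
whenever the denominator vanishes. -/
def dev (f : ℝ → ℝ) : ℝ :=
  (∫ v, v * (f v - equil f v)) / (∫ v, v * equil f v)

/-- Nondegeneracy of the flux `A` on `[a,b]`. -/
def Nondeg (d : ℕ) (A : ℝ → EuclideanSpace ℝ (Fin d)) (a b : ℝ) : Prop :=
  ∀ σ : EuclideanSpace ℝ (Fin d), ‖σ‖ = 1 → ∀ ξ : ℝ,
    volume {v ∈ Set.Icc a b | (inner ℝ (deriv A v) σ : ℝ) = ξ} = 0

/-- Grid values `f_h(·, nh, ·)` of the time-discrete kinetic scheme. -/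
def schemeGrid (d : ℕ) (ε h : ℝ) (A : ℝ → EuclideanSpace ℝ (Fin d))
    (u₀ : EuclideanSpace ℝ (Fin d) → ℝ) :
    ℕ → EuclideanSpace ℝ (Fin d) → ℝ → ℝ
  | 0 => fun x v => chiFn (u₀ x) v
  | n + 1 => fun x v =>
      if ε < dev (fun w => schemeGrid d ε h A u₀ n (x - h • deriv A w) w) then
        equil (fun w => schemeGrid d ε h A u₀ n (x - h • deriv A w) w) v
      else schemeGrid d ε h A u₀ n (x - h • deriv A v) v

/-- The time-discrete kinetic scheme `f_h(x,t,v)`. -/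
def scheme (d : ℕ) (ε h : ℝ) (A : ℝ → EuclideanSpace ℝ (Fin d))
    (u₀ : EuclideanSpace ℝ (Fin d) → ℝ)
    (x : EuclideanSpace ℝ (Fin d)) (t : ℝ) (v : ℝ) : ℝ :=
  schemeGrid d ε h A u₀ ⌊t / h⌋₊ (x - (t - (⌊t / h⌋₊ : ℝ) * h) • deriv A v) v

/-! ### Auxiliary lemmas -/

section Aux

/-- The good predicate: `y` is the value of a density at `v` that is `1` on `[0,ub]`,
vanishes off `[0,M]`, and takes values in `{0,1}`. -/
def Gd (ub M : ℝ) (v y : ℝ) : Prop :=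
  (v ∈ Set.Icc (0:ℝ) ub → y = 1) ∧ (v ∉ Set.Icc (0:ℝ) M → y = 0) ∧ (y = 0 ∨ y = 1)

lemma chiFn_eq_ind : (fun q : ℝ × ℝ => chiFn q.1 q.2) =
    Set.indicator ({q : ℝ × ℝ | 0 ≤ q.1} ∩ {q | 0 ≤ q.2} ∩ {q | q.2 ≤ q.1}) (fun _ => (1:ℝ))
    - Set.indicator ({q : ℝ × ℝ | q.1 < 0} ∩ {q | q.1 ≤ q.2} ∩ {q | q.2 ≤ 0})
      (fun _ => (1:ℝ)) := by
  funext q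
  simp only [chiFn, Pi.sub_apply, Set.indicator, Set.mem_inter_iff, Set.mem_setOf_eq, Set.mem_Icc]
  split_ifs <;> simp_all <;> linarith

lemma chiFn_measurable : Measurable (fun q : ℝ × ℝ => chiFn q.1 q.2) := by
  rw [chiFn_eq_ind]
  apply Measurable.sub <;> apply Measurable.indicator measurable_const
  · exact ((measurableSet_le measurable_const measurable_fst).inter
      (measurableSet_le measurable_const measurable_snd)).inter
      (measurableSet_le measurable_snd measurable_fst)
  · exact ((measurableSet_lt measurable_fst measurable_const).inter
      (measurableSet_le measurable_fst measurable_snd)).inter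
      (measurableSet_le measurable_snd measurable_const)

lemma chiFn_of_nonneg {u : ℝ} (hu : 0 ≤ u) :
    chiFn u = Set.indicator (Set.Icc 0 u) (fun _ => (1:ℝ)) := by
  funext v; simp [chiFn, hu]

lemma chiFn_good {ub M u : ℝ} (hub : 0 < ub) (h1 : ub ≤ u) (h2 : u ≤ M) (v : ℝ) :
    Gd ub M v (chiFn u v) := by
  have hu : 0 ≤ u := le_trans hub.le h1
  rw [chiFn_of_nonneg hu]
  refine ⟨fun hv => ?_, fun hv => ?_, ?_⟩
  · rw [Set.indicator_of_mem]; exact ⟨hv.1, hv.2.trans h1⟩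
  · rw [Set.indicator_of_notMem]
    intro hc; exact hv ⟨hc.1, hc.2.trans h2⟩
  · by_cases hv : v ∈ Set.Icc (0:ℝ) u <;> simp [hv]

lemma measurableSet_Gd (ub M : ℝ) : MeasurableSet {q : ℝ × ℝ | Gd ub M q.1 q.2} := by
  have : {q : ℝ × ℝ | Gd ub M q.1 q.2} =
      (((Prod.fst ⁻¹' Set.Icc (0:ℝ) ub)ᶜ ∪ Prod.snd ⁻¹' {(1:ℝ)}) ∩
        ((Prod.fst ⁻¹' Set.Icc (0:ℝ) M) ∪ Prod.snd ⁻¹' {(0:ℝ)})) ∩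
        (Prod.snd ⁻¹' {(0:ℝ)} ∪ Prod.snd ⁻¹' {(1:ℝ)}) := by
    ext q
    simp only [Gd, Set.mem_inter_iff, Set.mem_union, Set.mem_compl_iff, Set.mem_preimage,
      Set.mem_setOf_eq, Set.mem_singleton_iff]
    tauto
  rw [this]
  exact (((measurable_fst measurableSet_Icc).compl.union
      (measurable_snd (measurableSet_singleton _))).inter
      ((measurable_fst measurableSet_Icc).union
      (measurable_snd (measurableSet_singleton _)))).inter
    ((measurable_snd (measurableSet_singleton _)).union
      (measurable_snd (measurableSet_singleton _)))

variable {d : ℕ} {ε h : ℝ} {A : ℝ → EuclideanSpace ℝ (Fin d)}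
  {u₀ : EuclideanSpace ℝ (Fin d) → ℝ}

local notation "E" => EuclideanSpace ℝ (Fin d)

lemma shear_measurable (hA' : Continuous (deriv A)) :
    Measurable (fun p : E × ℝ => ((p.1 - h • deriv A p.2, p.2) : E × ℝ)) :=
  (measurable_fst.sub ((hA'.measurable.comp measurable_snd).const_smul h)).prodMk
    measurable_snd

lemma grid_measurable (hu₀m : Measurable u₀) (hA' : Continuous (deriv A)) :
    ∀ n : ℕ, Measurable (fun p : E × ℝ => schemeGrid d ε h A u₀ n p.1 p.2) := by
  intro n
  induction n with
  | zero =>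
    exact chiFn_measurable.comp ((hu₀m.comp measurable_fst).prodMk measurable_snd)
  | succ n ih =>
    have hG' : Measurable (fun p : E × ℝ =>
        schemeGrid d ε h A u₀ n (p.1 - h • deriv A p.2) p.2) :=
      ih.comp (shear_measurable hA')
    have hU : Measurable (fun x : E =>
        ∫ w, schemeGrid d ε h A u₀ n (x - h • deriv A w) w) := by
      have := (hG'.stronglyMeasurable.integral_prod_right' (ν := (volume : Measure ℝ)))
      exact this.measurable
    have hchiU : Measurable (fun p : E × ℝ => chiFn
        (∫ w, schemeGrid d ε h A u₀ n (p.1 - h • deriv A w) w) p.2) :=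
      chiFn_measurable.comp ((hU.comp measurable_fst).prodMk measurable_snd)
    have hI1 : Measurable (fun x : E => ∫ w, w *
        (schemeGrid d ε h A u₀ n (x - h • deriv A w) w -
          equil (fun w' => schemeGrid d ε h A u₀ n (x - h • deriv A w') w') w)) := by
      have hmm : Measurable (fun p : E × ℝ => p.2 *
          (schemeGrid d ε h A u₀ n (p.1 - h • deriv A p.2) p.2 -
            equil (fun w' => schemeGrid d ε h A u₀ n (p.1 - h • deriv A w') w') p.2)) := by
        simp only [equil]
        exact measurable_snd.mul (hG'.sub hchiU)
      exact (hmm.stronglyMeasurable.integral_prod_right' (ν := (volume : Measure ℝ))).measurable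
    have hI2 : Measurable (fun x : E => ∫ w, w *
        equil (fun w' => schemeGrid d ε h A u₀ n (x - h • deriv A w') w') w) := by
      have hmm : Measurable (fun p : E × ℝ => p.2 *
          equil (fun w' => schemeGrid d ε h A u₀ n (p.1 - h • deriv A w') w') p.2) := by
        simp only [equil]
        exact measurable_snd.mul hchiU
      exact (hmm.stronglyMeasurable.integral_prod_right' (ν := (volume : Measure ℝ))).measurable
    have hdev : Measurable (fun x : E =>
        dev (fun w => schemeGrid d ε h A u₀ n (x - h • deriv A w) w)) := by
      simp only [dev]
      exact hI1.div hI2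
    have hcond : MeasurableSet {p : E × ℝ | ε < dev
        (fun w => schemeGrid d ε h A u₀ n (p.1 - h • deriv A w) w)} := by
      have : {p : E × ℝ | ε < dev (fun w => schemeGrid d ε h A u₀ n (p.1 - h • deriv A w) w)}
          = Prod.fst ⁻¹' {x : E | ε < dev
            (fun w => schemeGrid d ε h A u₀ n (x - h • deriv A w) w)} := rfl
      rw [this]
      exact measurable_fst (measurableSet_lt measurable_const hdev)
    have : (fun p : E × ℝ => schemeGrid d ε h A u₀ (n+1) p.1 p.2) =
        fun p : E × ℝ =>
          if p ∈ {p : E × ℝ | ε < dev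
              (fun w => schemeGrid d ε h A u₀ n (p.1 - h • deriv A w) w)} then
            chiFn (∫ w, schemeGrid d ε h A u₀ n (p.1 - h • deriv A w) w) p.2
          else schemeGrid d ε h A u₀ n (p.1 - h • deriv A p.2) p.2 := by
      funext p
      simp only [schemeGrid, equil, Set.mem_setOf_eq]
    rw [this]
    exact Measurable.ite hcond hchiU hG'

/-- Pulling back an a.e. property of the product measure under the shear map. -/
lemma shear_ae (hA' : Continuous (deriv A)) {Q : E × ℝ → Prop}
    (hQ : ∀ᵐ p ∂((volume : Measure E).prod (volume : Measure ℝ)), Q p) :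
    ∀ᵐ p ∂((volume : Measure E).prod (volume : Measure ℝ)),
      Q (p.1 - h • deriv A p.2, p.2) := by
  rw [ae_iff] at hQ ⊢
  obtain ⟨N, hNsub, hNmeas, hNnull⟩ := exists_measurable_superset_of_null hQ
  refine measure_mono_null (fun p hp => ?_) (show ((volume : Measure E).prod volume)
    ((fun p : E × ℝ => ((p.1 - h • deriv A p.2, p.2) : E × ℝ)) ⁻¹' N) = 0 from ?_)
  · exact hNsub hp
  · rw [Measure.prod_apply_symm ((shear_measurable hA') hNmeas)]
    have hinv : ∀ (c : E) (s : Set E), (volume : Measure E) ((fun x => x - c) ⁻¹' s)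
        = (volume : Measure E) s := by
      intro c s
      simpa [sub_eq_add_neg] using measure_preimage_add_right (volume : Measure E) (-c) s
    have hsl : ∀ w : ℝ, (fun x : E => ((x, w) : E × ℝ)) ⁻¹'
        ((fun p : E × ℝ => ((p.1 - h • deriv A p.2, p.2) : E × ℝ)) ⁻¹' N)
        = (fun x : E => x - h • deriv A w) ⁻¹' ((fun x : E => ((x, w) : E × ℝ)) ⁻¹' N) :=
      fun w => rfl
    calc ∫⁻ w, (volume : Measure E) ((fun x : E => ((x, w) : E × ℝ)) ⁻¹'
          ((fun p : E × ℝ => ((p.1 - h • deriv A p.2, p.2) : E × ℝ)) ⁻¹' N)) ∂volume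
        = ∫⁻ w, (volume : Measure E) ((fun x : E => ((x, w) : E × ℝ)) ⁻¹' N) ∂volume := by
          refine lintegral_congr fun w => ?_
          rw [hsl w, hinv]
      _ = ((volume : Measure E).prod (volume : Measure ℝ)) N :=
          (Measure.prod_apply_symm hNmeas).symm
      _ = 0 := hNnull

lemma key_gd (hu₀m : Measurable u₀) (hA' : Continuous (deriv A)) {M ub : ℝ}
    (hub : 0 < ub) (hubM : ub ≤ M)
    (h0 : ∀ᵐ x ∂(volume : Measure E), ub ≤ u₀ x ∧ u₀ x ≤ M) :
    ∀ n : ℕ, ∀ᵐ p ∂((volume : Measure E).prod (volume : Measure ℝ)),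
      Gd ub M p.2 (schemeGrid d ε h A u₀ n p.1 p.2) := by
  intro n
  induction n with
  | zero =>
    have hx : ∀ᵐ p ∂((volume : Measure E).prod (volume : Measure ℝ)),
        ub ≤ u₀ p.1 ∧ u₀ p.1 ≤ M :=
      Measure.quasiMeasurePreserving_fst.tendsto_ae.eventually h0
    filter_upwards [hx] with p hp
    simpa [schemeGrid] using chiFn_good hub hp.1 hp.2 p.2
  | succ n ih =>
    have hsh := shear_ae (h := h) hA' ih
    have hxw : ∀ᵐ x ∂(volume : Measure E), ∀ᵐ w ∂(volume : Measure ℝ),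
        Gd ub M w (schemeGrid d ε h A u₀ n (x - h • deriv A w) w) :=
      Measure.ae_ae_of_ae_prod hsh
    have hstep : ∀ᵐ x ∂(volume : Measure E), ∀ᵐ v ∂(volume : Measure ℝ),
        Gd ub M v (schemeGrid d ε h A u₀ (n + 1) x v) := by
      filter_upwards [hxw] with x hx
      by_cases hifc : ε < dev (fun w => schemeGrid d ε h A u₀ n (x - h • deriv A w) w)
      · -- projection branch
        have hmeasg : Measurable (fun w => schemeGrid d ε h A u₀ n (x - h • deriv A w) w) :=
          (grid_measurable hu₀m hA' n).comp
            ((measurable_const.sub (hA'.measurable.const_smul h)).prodMk measurable_id)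
        have hindM : Integrable ((Set.Icc (0:ℝ) M).indicator (fun _ => (1:ℝ))) :=
          (integrable_indicator_iff measurableSet_Icc).2
            (integrableOn_const measure_Icc_lt_top.ne)
        have hindub : Integrable ((Set.Icc (0:ℝ) ub).indicator (fun _ => (1:ℝ))) :=
          (integrable_indicator_iff measurableSet_Icc).2
            (integrableOn_const measure_Icc_lt_top.ne)
        have hint : Integrable (fun w => schemeGrid d ε h A u₀ n (x - h • deriv A w) w) := by
          refine Integrable.mono' hindM hmeasg.aestronglyMeasurable ?_
          filter_upwards [hx] with w hw
          by_cases hwm : w ∈ Set.Icc (0:ℝ) M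
          · rw [Set.indicator_of_mem hwm]
            rcases hw.2.2 with h' | h' <;> rw [h'] <;> norm_num
          · rw [Set.indicator_of_notMem hwm, hw.2.1 hwm]
            simp
        have hlb : ub ≤ ∫ w, schemeGrid d ε h A u₀ n (x - h • deriv A w) w := by
          have hmono : (Set.Icc (0:ℝ) ub).indicator (fun _ => (1:ℝ)) ≤ᵐ[volume]
              (fun w => schemeGrid d ε h A u₀ n (x - h • deriv A w) w) := by
            filter_upwards [hx] with w hw
            by_cases hwm : w ∈ Set.Icc (0:ℝ) ub
            · rw [Set.indicator_of_mem hwm, hw.1 hwm]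
            · rw [Set.indicator_of_notMem hwm]
              rcases hw.2.2 with h' | h' <;> rw [h'] <;> norm_num
          have := integral_mono_ae hindub hint hmono
          rw [integral_indicator_const (1:ℝ) measurableSet_Icc, Real.volume_real_Icc_of_le (by linarith),
            smul_eq_mul, mul_one] at this
          linarith
        have hub' : (∫ w, schemeGrid d ε h A u₀ n (x - h • deriv A w) w) ≤ M := by
          have hmono : (fun w => schemeGrid d ε h A u₀ n (x - h • deriv A w) w) ≤ᵐ[volume]
              (Set.Icc (0:ℝ) M).indicator (fun _ => (1:ℝ)) := by
            filter_upwards [hx] with w hw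
            by_cases hwm : w ∈ Set.Icc (0:ℝ) M
            · rw [Set.indicator_of_mem hwm]
              rcases hw.2.2 with h' | h' <;> rw [h'] <;> norm_num
            · rw [Set.indicator_of_notMem hwm, hw.2.1 hwm]
          have := integral_mono_ae hint hindM hmono
          rw [integral_indicator_const (1:ℝ) measurableSet_Icc, Real.volume_real_Icc_of_le (by linarith),
            smul_eq_mul, mul_one] at this
          linarith
        have hrw : ∀ v, schemeGrid d ε h A u₀ (n + 1) x v =
            chiFn (∫ w, schemeGrid d ε h A u₀ n (x - h • deriv A w) w) v := by
          intro v
          simp only [schemeGrid, equil, if_pos hifc]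
        filter_upwards with v
        rw [hrw v]
        exact chiFn_good hub hlb hub' v
      · have hrw : ∀ v, schemeGrid d ε h A u₀ (n + 1) x v =
            schemeGrid d ε h A u₀ n (x - h • deriv A v) v := by
          intro v
          simp only [schemeGrid, equil, if_neg hifc]
        filter_upwards [hx] with v hv
        rw [hrw v]
        exact hv
    rw [Measure.ae_prod_iff_ae_ae]
    · exact hstep
    · have hset : {p : E × ℝ | Gd ub M p.2 (schemeGrid d ε h A u₀ (n + 1) p.1 p.2)} =
          (fun p : E × ℝ => ((p.2, schemeGrid d ε h A u₀ (n + 1) p.1 p.2) : ℝ × ℝ)) ⁻¹'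
            {q : ℝ × ℝ | Gd ub M q.1 q.2} := rfl
      rw [hset]
      exact (measurable_snd.prodMk (grid_measurable hu₀m hA' (n + 1))) (measurableSet_Gd ub M)

end Aux

/-- **Persistence of a lower kinetic plateau**: if `u₀ ≥ ū > 0` a.e. then the grid
densities equal `1` a.e. on `[0,ū]`, so `[0,ū] ⊂ supp f_h(x,nh,·)` and the first
`v`-moment is at least `ū²/2`. -/
theorem scheme_lower_plateau
    (d : ℕ) (hd : 1 ≤ d) (ε : ℝ) (hε : 0 < ε) (h : ℝ) (hh : 0 < h)
    (A : ℝ → EuclideanSpace ℝ (Fin d)) (hA : ContDiff ℝ 2 A)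
    (u₀ : EuclideanSpace ℝ (Fin d) → ℝ) (hu₀m : Measurable u₀)
    (M : ℝ) (hM : ∀ᵐ x ∂(volume : Measure (EuclideanSpace ℝ (Fin d))), |u₀ x| ≤ M)
    (ub : ℝ) (hub : 0 < ub)
    (hlow : ∀ᵐ x ∂(volume : Measure (EuclideanSpace ℝ (Fin d))), ub ≤ u₀ x) :
    ∀ n : ℕ,
      ∀ᵐ x ∂(volume : Measure (EuclideanSpace ℝ (Fin d))),
        (∀ᵐ v ∂(volume : Measure ℝ), v ∈ Set.Icc (0 : ℝ) ub →
          schemeGrid d ε h A u₀ n x v = 1) ∧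
        Set.Icc (0 : ℝ) ub ⊆ tsupport (fun v => schemeGrid d ε h A u₀ n x v) ∧
        ub ^ 2 / 2 ≤ ∫ v, v * schemeGrid d ε h A u₀ n x v := by
  have hA' : Continuous (deriv A) := hA.continuous_deriv one_le_two
  have hne : (volume : Measure (EuclideanSpace ℝ (Fin d))) ≠ 0 := by
    intro h0
    have := (isOpen_univ (X := EuclideanSpace ℝ (Fin d))).measure_pos
      (volume : Measure (EuclideanSpace ℝ (Fin d))) ⟨0, trivial⟩
    rw [h0] at this
    simp at this
  haveI : (ae (volume : Measure (EuclideanSpace ℝ (Fin d)))).NeBot := ae_neBot.2 hne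
  obtain ⟨x₀, hx₁, hx₂⟩ := (hM.and hlow).exists
  have hubM : ub ≤ M := hx₂.trans ((le_abs_self _).trans hx₁)
  have hM0 : (0:ℝ) ≤ M := le_trans hub.le hubM
  have h0 : ∀ᵐ x ∂(volume : Measure (EuclideanSpace ℝ (Fin d))), ub ≤ u₀ x ∧ u₀ x ≤ M := by
    filter_upwards [hM, hlow] with x h1 h2
    exact ⟨h2, (le_abs_self _).trans h1⟩
  intro n
  have hxw := Measure.ae_ae_of_ae_prod (key_gd (ε := ε) (h := h) hu₀m hA' hub hubM h0 n)
  filter_upwards [hxw] with x hx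
  have hfmeas : Measurable (fun v => schemeGrid d ε h A u₀ n x v) :=
    (grid_measurable hu₀m hA' n).comp (measurable_const.prodMk measurable_id)
  refine ⟨?_, ?_, ?_⟩
  · filter_upwards [hx] with v hv
    exact hv.1
  · intro y hy
    by_contra hyn
    obtain ⟨δ, hδ, hball⟩ := Metric.isOpen_iff.1
      (isClosed_tsupport (fun v => schemeGrid d ε h A u₀ n x v)).isOpen_compl y hyn
    have hy0 : 0 ≤ y := hy.1
    have hyub : y ≤ ub := hy.2
    have hab : max 0 (y - δ) < min ub (y + δ) := by
      apply max_lt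
      · exact lt_min hub (by linarith)
      · exact lt_min (by linarith) (by linarith)
    have hsub : Set.Ioo (max 0 (y - δ)) (min ub (y + δ)) ⊆ Metric.ball y δ := by
      intro z hz
      rw [Real.ball_eq_Ioo]
      exact ⟨lt_of_le_of_lt (le_max_right _ _) hz.1, lt_of_lt_of_le hz.2 (min_le_right _ _)⟩
    have hsub2 : Set.Ioo (max 0 (y - δ)) (min ub (y + δ)) ⊆ Set.Icc 0 ub := fun z hz =>
      ⟨(le_max_left _ _).trans hz.1.le, hz.2.le.trans (min_le_left _ _)⟩
    have hnull : volume (Set.Ioo (max 0 (y - δ)) (min ub (y + δ))) = 0 := by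
      refine measure_mono_null (fun z hz => ?_) (ae_iff.1 hx)
      intro hGd
      have h1 : schemeGrid d ε h A u₀ n x z = 1 := hGd.1 (hsub2 hz)
      have h2 : schemeGrid d ε h A u₀ n x z = 0 :=
        image_eq_zero_of_notMem_tsupport (hball (hsub hz))
      rw [h1] at h2
      norm_num at h2
    rw [Real.volume_Ioo] at hnull
    have := ENNReal.ofReal_eq_zero.1 hnull
    linarith
  · have hindM2 : Integrable ((Set.Icc (0:ℝ) M).indicator (fun _ => M)) :=
      (integrable_indicator_iff measurableSet_Icc).2
        (integrableOn_const measure_Icc_lt_top.ne)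
    have hint : Integrable (fun v => v * schemeGrid d ε h A u₀ n x v) := by
      refine Integrable.mono' hindM2 (measurable_id.mul hfmeas).aestronglyMeasurable ?_
      filter_upwards [hx] with v hv
      by_cases hvm : v ∈ Set.Icc (0:ℝ) M
      · rw [Set.indicator_of_mem hvm]
        have h1 : |schemeGrid d ε h A u₀ n x v| ≤ 1 := by
          rcases hv.2.2 with h' | h' <;> rw [h'] <;> norm_num
        have h2 : |v| ≤ M := abs_le.2 ⟨by linarith [hvm.1], hvm.2⟩
        calc ‖v * schemeGrid d ε h A u₀ n x v‖
            = |v| * |schemeGrid d ε h A u₀ n x v| := by rw [Real.norm_eq_abs, abs_mul]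
          _ ≤ M * 1 := mul_le_mul h2 h1 (abs_nonneg _) hM0
          _ = M := mul_one M
      · rw [Set.indicator_of_notMem hvm, hv.2.1 hvm, mul_zero]
        simp
    have hlow2 : (Set.Icc (0:ℝ) ub).indicator id ≤ᵐ[volume]
        (fun v => v * schemeGrid d ε h A u₀ n x v) := by
      filter_upwards [hx] with v hv
      by_cases hvm : v ∈ Set.Icc (0:ℝ) ub
      · rw [Set.indicator_of_mem hvm, hv.1 hvm, mul_one]
        exact le_refl _
      · rw [Set.indicator_of_notMem hvm]
        rcases hv.2.2 with h' | h'
        · rw [h', mul_zero]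
        · rw [h', mul_one]
          by_contra hneg
          push_neg at hneg
          have hnm : v ∉ Set.Icc (0:ℝ) M := fun hc => absurd hc.1 (not_le.2 hneg)
          rw [hv.2.1 hnm] at h'
          norm_num at h'
    have hindid : Integrable ((Set.Icc (0:ℝ) ub).indicator id) :=
      (integrable_indicator_iff measurableSet_Icc).2 continuous_id.integrableOn_Icc
    have hval : (∫ v, (Set.Icc (0:ℝ) ub).indicator id v) = ub ^ 2 / 2 := by
      rw [integral_indicator measurableSet_Icc, integral_Icc_eq_integral_Ioc,
        ← intervalIntegral.integral_of_le hub.le]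
      show (∫ v in (0:ℝ)..ub, v) = ub ^ 2 / 2
      rw [integral_id]
      norm_num
    calc ub ^ 2 / 2 = ∫ v, (Set.Icc (0:ℝ) ub).indicator id v := hval.symm
      _ ≤ _ := integral_mono_ae hindid hint hlow2

end
end

section
/- Let f ∈ L¹((0,∞)) have bounded support and satisfy f(v) ∈ [0,1] for a.e. v. Set u = ∫₀^∞ f(v) dv and f₀ = 1_{[0,u]}. Then there exists a nondecreasing map τ : [0,∞) → [0,∞) such that τ(v) ≥ v for all v ≥ 0 and, for every bounded measurable φ : [0,∞) → ℝ, ∫₀^∞ φ(τ(v)) f₀(v) dv = ∫₀^∞ φ(v) f(v) dv (i.e. the pushforward of the measure f₀(v) dv under τ is the measure f(v) dv). In particular, for every convex differentiable η : ℝ → ℝ, ∫₀^∞ η′(v) f(v) dv ≥ ∫₀^∞ η′(v) f₀(v) dv = η(u) − η(0). -/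
open MeasureTheory Real Filter Topology

noncomputable section

/-- **Optimal transport map from the equilibrium density** (Lemma A.1): mass can be
moved from `f₀ = 1_{[0,u]}` to `f` by a nondecreasing map `τ` with `τ(v) ≥ v`;
consequently `∫ η′ f ≥ ∫ η′ f₀ = η(u) − η(0)` for convex `η`. -/
theorem transport_map_lemma
    (f : ℝ → ℝ) (hfm : Measurable f)
    (hfi : IntegrableOn f (Set.Ioi (0 : ℝ)))
    (hbdd : Bornology.IsBounded {v ∈ Set.Ioi (0 : ℝ) | f v ≠ 0})
    (hfr : ∀ᵐ v ∂(volume.restrict (Set.Ioi (0 : ℝ))), f v ∈ Set.Icc (0 : ℝ) 1)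
    (u : ℝ) (hu : u = ∫ v in Set.Ioi (0 : ℝ), f v) :
    ∃ τ : ℝ → ℝ,
      MonotoneOn τ (Set.Ici 0) ∧
      (∀ v, 0 ≤ v → v ≤ τ v) ∧
      -- `τ` pushes `f₀(v) dv` forward to `f(v) dv`
      (∀ φ : ℝ → ℝ, Measurable φ → (∃ Cb : ℝ, ∀ v, |φ v| ≤ Cb) →
        (∫ v in Set.Ioi (0 : ℝ),
            φ (τ v) * Set.indicator (Set.Icc 0 u) (fun _ => (1 : ℝ)) v)
          = ∫ v in Set.Ioi (0 : ℝ), φ v * f v) ∧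
      -- consequence for convex entropies
      (∀ η : ℝ → ℝ, ConvexOn ℝ Set.univ η → (∀ v, DifferentiableAt ℝ η v) →
        (∫ v in Set.Ioi (0 : ℝ),
            deriv η v * Set.indicator (Set.Icc 0 u) (fun _ => (1 : ℝ)) v) = η u - η 0 ∧
        (∫ v in Set.Ioi (0 : ℝ),
            deriv η v * Set.indicator (Set.Icc 0 u) (fun _ => (1 : ℝ)) v)
          ≤ ∫ v in Set.Ioi (0 : ℝ), deriv η v * f v) := by
  -- basic positivity facts
  have hf0 : 0 ≤ᵐ[volume.restrict (Set.Ioi (0:ℝ))] f := hfr.mono fun v h => h.1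
  have hf1 : f ≤ᵐ[volume.restrict (Set.Ioi (0:ℝ))] fun _ => (1:ℝ) := hfr.mono fun v h => h.2
  have hu0 : 0 ≤ u := hu ▸ integral_nonneg_of_ae hf0
  -- a radius beyond which f vanishes
  obtain ⟨r, hr⟩ := hbdd.subset_closedBall 0
  set R : ℝ := max (max r u) 0 with hRdef
  have hR0 : (0:ℝ) ≤ R := le_max_right _ _
  have hRu : u ≤ R := le_trans (le_max_right r u) (le_max_left _ _)
  have hfR : ∀ v, R < v → f v = 0 := by
    intro v hv
    by_contra hne
    have hv0 : v ∈ Set.Ioi (0:ℝ) := lt_of_le_of_lt hR0 hv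
    have hball : v ∈ Metric.closedBall (0:ℝ) r := hr ⟨hv0, hne⟩
    rw [Metric.mem_closedBall, Real.dist_eq, sub_zero, abs_of_pos hv0] at hball
    have : v ≤ R := le_trans hball (le_trans (le_max_left r u) (le_max_left _ _))
    linarith
  -- the cumulative distribution F
  set F : ℝ → ℝ := fun w => ∫ t in Set.Ioc 0 w, f t with hFdef
  have hFint : ∀ w, IntegrableOn f (Set.Ioc 0 w) :=
    fun w => hfi.mono_set Set.Ioc_subset_Ioi_self
  have hf0' : ∀ w : ℝ, 0 ≤ᵐ[volume.restrict (Set.Ioc 0 w)] f :=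
    fun w => ae_restrict_of_ae_restrict_of_subset Set.Ioc_subset_Ioi_self hf0
  have hF0 : ∀ w : ℝ, w ≤ 0 → F w = 0 := by
    intro w hw
    have : Set.Ioc (0:ℝ) w = ∅ := Set.Ioc_eq_empty (by intro h; linarith)
    simp [hFdef, this]
  have hFmono : Monotone F := by
    intro w₁ w₂ h
    exact setIntegral_mono_set (hFint w₂) (hf0' w₂)
      ((Set.Ioc_subset_Ioc_right h).eventuallyLE)
  have hFle_u : ∀ w, F w ≤ u := by
    intro w
    rw [hu]
    exact setIntegral_mono_set hfi (hf0) (Set.Ioc_subset_Ioi_self.eventuallyLE)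
  have hF_nonneg : ∀ w, 0 ≤ F w := fun w => integral_nonneg_of_ae (hf0' w)
  have hseg : ∀ a b : ℝ, 0 ≤ a → a ≤ b → (∫ t in Set.Ioc a b, f t) ≤ b - a := by
    intro a b ha hab
    have hsub : Set.Ioc a b ⊆ Set.Ioi (0:ℝ) := fun x hx => lt_of_le_of_lt ha hx.1
    calc (∫ t in Set.Ioc a b, f t) ≤ ∫ _t in Set.Ioc a b, (1:ℝ) := by
          refine integral_mono_ae (hfi.mono_set hsub) (integrableOn_const ?_)
            (ae_restrict_of_ae_restrict_of_subset hsub hf1)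
          rw [Real.volume_Ioc]; exact ENNReal.ofReal_ne_top
      _ = b - a := by
          rw [setIntegral_const, measureReal_def, Real.volume_Ioc, ENNReal.toReal_ofReal (by linarith),
            smul_eq_mul, mul_one]
  have hFle_id : ∀ w : ℝ, 0 ≤ w → F w ≤ w := by
    intro w hw
    have := hseg 0 w le_rfl hw
    simpa using this
  -- F equals u past R
  have hFeq_u : ∀ w, R ≤ w → F w = u := by
    intro w hw
    have hw0 : (0:ℝ) ≤ w := hR0.trans hw
    have hsplit : Set.Ioc (0:ℝ) w ∪ Set.Ioi w = Set.Ioi (0:ℝ) := Set.Ioc_union_Ioi_eq_Ioi hw0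
    have hdisj : Disjoint (Set.Ioc (0:ℝ) w) (Set.Ioi w) := by
      rw [Set.disjoint_left]; intro x hx hx'; exact absurd hx.2 (not_le.2 hx')
    have hzero : (∫ t in Set.Ioi w, f t) = 0 := by
      rw [setIntegral_congr_fun measurableSet_Ioi
        (fun v hv => hfR v (lt_of_le_of_lt hw hv) : Set.EqOn f (fun _ => (0:ℝ)) (Set.Ioi w))]
      simp
    have := setIntegral_union hdisj measurableSet_Ioi (hFint w)
      (hfi.mono_set (Set.Ioi_subset_Ioi hw0))
    rw [hsplit] at this
    rw [hu, this, hzero, add_zero]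
  -- F is continuous (1-Lipschitz)
  have hFlip : ∀ a b : ℝ, a ≤ b → F b - F a ≤ b - a := by
    intro a b hab
    rcases le_or_gt b 0 with hb | hb
    · rw [hF0 a (hab.trans hb), hF0 b hb]; linarith
    rcases le_or_gt a 0 with ha | ha
    · rw [hF0 a ha]
      have := hFle_id b hb.le
      linarith
    · have hsplit : Set.Ioc (0:ℝ) a ∪ Set.Ioc a b = Set.Ioc 0 b :=
        Set.Ioc_union_Ioc_eq_Ioc ha.le hab
      have hdisj : Disjoint (Set.Ioc (0:ℝ) a) (Set.Ioc a b) := by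
        rw [Set.disjoint_left]; intro x hx hx'; exact absurd hx.2 (not_le.2 hx'.1)
      have heq := setIntegral_union hdisj measurableSet_Ioc (hFint a)
        (hfi.mono_set (fun x hx => lt_of_le_of_lt ha.le hx.1))
      rw [hsplit] at heq
      have := hseg a b ha.le hab
      have hFb : F b = F a + ∫ t in Set.Ioc a b, f t := heq
      linarith
  have hFcont : Continuous F := by
    have key : ∀ x y : ℝ, x ≤ y → |F x - F y| ≤ |x - y| := by
      intro x y h
      have h1 := hFmono h
      have h2 := hFlip x y h
      rw [abs_of_nonpos (by linarith), abs_of_nonpos (by linarith)]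
      linarith
    have : LipschitzWith 1 F := by
      refine LipschitzWith.of_dist_le_mul fun x y => ?_
      rw [Real.dist_eq, Real.dist_eq, NNReal.coe_one, one_mul]
      rcases le_total x y with h | h
      · exact key x y h
      · rw [abs_sub_comm, abs_sub_comm x y]; exact key y x h
    exact this.continuous
  -- the transport map
  set S : ℝ → Set ℝ := fun v => {w : ℝ | 0 ≤ w ∧ min v u ≤ F w} with hSdef
  have hRS : ∀ v, R ∈ S v := fun v => ⟨hR0, by rw [hFeq_u R le_rfl]; exact min_le_right _ _⟩
  have hSne : ∀ v, (S v).Nonempty := fun v => ⟨R, hRS v⟩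
  have hSbdd : ∀ v, BddBelow (S v) := fun v => ⟨0, fun w hw => hw.1⟩
  have hSclosed : ∀ v, IsClosed (S v) := by
    intro v
    have : S v = Set.Ici 0 ∩ F ⁻¹' (Set.Ici (min v u)) := by
      ext w; simp [hSdef, Set.mem_Ici]
    rw [this]
    exact isClosed_Ici.inter (isClosed_Ici.preimage hFcont)
  set g : ℝ → ℝ := fun v => sInf (S v) with hgdef
  have hg_mem : ∀ v, g v ∈ S v := fun v => (hSclosed v).csInf_mem (hSne v) (hSbdd v)
  have hg_ge : ∀ v, min v u ≤ g v := by
    intro v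
    refine le_csInf (hSne v) fun w hw => le_trans hw.2 (hFle_id w hw.1)
  have hg_le_R : ∀ v, g v ≤ R := fun v => csInf_le (hSbdd v) (hRS v)
  have hg_mono : Monotone g := by
    intro v₁ v₂ h
    exact csInf_le_csInf (hSbdd v₁) (hSne v₂)
      (fun w hw => ⟨hw.1, le_trans (min_le_min h le_rfl) hw.2⟩)
  set τ : ℝ → ℝ := fun v => g v + max (v - u) 0 with hτdef
  have hτ_mono : Monotone τ := by
    intro a b h
    have : max (a - u) 0 ≤ max (b - u) 0 := max_le_max (by linarith) le_rfl
    exact add_le_add (hg_mono h) this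
  have hτ_meas : Measurable τ := hτ_mono.measurable
  have hτ_ge : ∀ v, 0 ≤ v → v ≤ τ v := by
    intro v hv
    rcases le_total v u with h | h
    · have : min v u = v := min_eq_left h
      have h1 := hg_ge v
      rw [this] at h1
      have : (0:ℝ) ≤ max (v - u) 0 := le_max_right _ _
      simp only [hτdef]; linarith
    · have : min v u = u := min_eq_right h
      have h1 := hg_ge v
      rw [this] at h1
      have h2 : max (v - u) 0 = v - u := max_eq_left (by linarith)
      simp only [hτdef]; rw [h2]; linarith
  have hτ_eq : ∀ v, v ≤ u → τ v = g v := by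
    intro v hv
    simp only [hτdef]
    rw [max_eq_right (by linarith), add_zero]
  -- Galois connection for v ∈ Ioc 0 u
  have hgal : ∀ v ∈ Set.Ioc (0:ℝ) u, ∀ b : ℝ, τ v ≤ b ↔ v ≤ F b := by
    intro v hv b
    rw [hτ_eq v hv.2]
    have hmin : min v u = v := min_eq_left hv.2
    constructor
    · intro h
      have h1 : min v u ≤ F (g v) := (hg_mem v).2
      rw [hmin] at h1
      exact h1.trans (hFmono h)
    · intro h
      have hb0 : 0 ≤ b := by
        by_contra hb
        push_neg at hb
        rw [hF0 b hb.le] at h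
        linarith [hv.1]
      exact csInf_le (hSbdd v) ⟨hb0, by rw [hmin]; exact h⟩
  -- measures
  set μ₀ : Measure ℝ := volume.restrict (Set.Ioc 0 u) with hμ₀def
  set ν : Measure ℝ :=
    (volume.restrict (Set.Ioi (0:ℝ))).withDensity (fun v => ENNReal.ofReal (f v)) with hνdef
  haveI : IsFiniteMeasure μ₀ := by
    constructor
    rw [hμ₀def, Measure.restrict_apply_univ, Real.volume_Ioc]
    exact ENNReal.ofReal_lt_top
  have hmap_Iic : ∀ b, (Measure.map τ μ₀) (Set.Iic b) = ENNReal.ofReal (F b) := by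
    intro b
    rw [Measure.map_apply hτ_meas measurableSet_Iic,
      hμ₀def, Measure.restrict_apply (hτ_meas measurableSet_Iic)]
    have hset : τ ⁻¹' Set.Iic b ∩ Set.Ioc 0 u = Set.Ioc 0 (F b) := by
      ext v
      simp only [Set.mem_inter_iff, Set.mem_preimage, Set.mem_Iic, Set.mem_Ioc]
      constructor
      · rintro ⟨hb, hv0, hvu⟩
        exact ⟨hv0, (hgal v ⟨hv0, hvu⟩ b).1 hb⟩
      · rintro ⟨hv0, hvF⟩
        have hvu : v ≤ u := hvF.trans (hFle_u b)
        exact ⟨(hgal v ⟨hv0, hvu⟩ b).2 hvF, hv0, hvu⟩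
    rw [hset, Real.volume_Ioc, sub_zero]
  have hν_Iic : ∀ b, ν (Set.Iic b) = ENNReal.ofReal (F b) := by
    intro b
    rw [hνdef, withDensity_apply _ measurableSet_Iic,
      Measure.restrict_restrict measurableSet_Iic]
    have hset : Set.Iic b ∩ Set.Ioi (0:ℝ) = Set.Ioc 0 b := by
      rw [Set.inter_comm, Set.Ioi_inter_Iic]
    rw [hset, ← ofReal_integral_eq_lintegral_ofReal (hFint b) (hf0' b)]
  have hmap : Measure.map τ μ₀ = ν := by
    refine Measure.ext_of_Iic _ _ fun b => ?_
    rw [hmap_Iic, hν_Iic]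
  -- the key integral identity
  have key : ∀ φ : ℝ → ℝ, Measurable φ →
      (∫ v in Set.Ioc (0:ℝ) u, φ (τ v)) = ∫ v in Set.Ioi (0:ℝ), φ v * f v := by
    intro φ hφ
    have h1 : ∫ v in Set.Ioc (0:ℝ) u, φ (τ v) = ∫ v, φ v ∂(Measure.map τ μ₀) :=
      (integral_map hτ_meas.aemeasurable hφ.aestronglyMeasurable).symm
    rw [h1, hmap, hνdef]
    have h2 : (volume.restrict (Set.Ioi (0:ℝ))).withDensity (fun v => ENNReal.ofReal (f v))
        = (volume.restrict (Set.Ioi (0:ℝ))).withDensity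
            (fun v => (((f v).toNNReal : NNReal) : ENNReal)) := rfl
    rw [h2, integral_withDensity_eq_integral_smul hfm.real_toNNReal φ]
    refine integral_congr_ae (hf0.mono fun v hv => ?_)
    simp [NNReal.smul_def, Real.coe_toNNReal _ hv, mul_comm]
  -- indicator manipulation
  have hind : ∀ ψ : ℝ → ℝ,
      (∫ v in Set.Ioi (0:ℝ), ψ v * Set.indicator (Set.Icc 0 u) (fun _ => (1:ℝ)) v)
        = ∫ v in Set.Ioc (0:ℝ) u, ψ v := by
    intro ψ
    have h1 : ∀ v, ψ v * Set.indicator (Set.Icc 0 u) (fun _ => (1:ℝ)) v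
        = Set.indicator (Set.Icc 0 u) ψ v := by
      intro v
      by_cases h : v ∈ Set.Icc (0:ℝ) u
      · simp [Set.indicator_of_mem, h]
      · simp [Set.indicator_of_notMem, h]
    rw [setIntegral_congr_fun measurableSet_Ioi fun v _ => h1 v]
    rw [integral_indicator measurableSet_Icc, Measure.restrict_restrict measurableSet_Icc]
    have hset : Set.Icc (0:ℝ) u ∩ Set.Ioi 0 = Set.Ioc 0 u := by
      ext v
      constructor
      · rintro ⟨⟨_, h2⟩, h3⟩; exact ⟨h3, h2⟩
      · rintro ⟨h1', h2⟩; exact ⟨⟨h1'.le, h2⟩, h1'⟩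
    rw [hset]
  -- pushforward property
  have hpush : ∀ φ : ℝ → ℝ, Measurable φ →
      (∫ v in Set.Ioi (0:ℝ),
          φ (τ v) * Set.indicator (Set.Icc 0 u) (fun _ => (1:ℝ)) v)
        = ∫ v in Set.Ioi (0:ℝ), φ v * f v := by
    intro φ hφ
    exact (hind fun v => φ (τ v)).trans (key φ hφ)
  refine ⟨τ, hτ_mono.monotoneOn _, hτ_ge, fun φ hφ _ => hpush φ hφ, fun η hconv hdiff => ?_⟩
  -- monotone derivative
  have hηm : Monotone (deriv η) := by
    have := hconv.monotoneOn_deriv (fun x _ => hdiff x)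
    intro a b h
    exact this (Set.mem_univ a) (Set.mem_univ b) h
  have hη_meas : Measurable (deriv η) := measurable_deriv η
  -- part (A): FTC
  have hA : (∫ v in Set.Ioi (0:ℝ),
      deriv η v * Set.indicator (Set.Icc 0 u) (fun _ => (1:ℝ)) v) = η u - η 0 := by
    rw [hind (deriv η)]
    have hFTC : ∫ v in (0:ℝ)..u, deriv η v = η u - η 0 :=
      intervalIntegral.integral_deriv_eq_sub (fun x _ => hdiff x) hηm.intervalIntegrable
    rw [← intervalIntegral.integral_of_le hu0, hFTC]
  refine ⟨hA, ?_⟩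
  -- part (B): inequality
  set φ : ℝ → ℝ := fun v => deriv η (max 0 (min v R)) with hφdef
  have hφ_meas : Measurable φ :=
    hη_meas.comp ((continuous_const.max (continuous_id.min continuous_const)).measurable)
  -- τ maps (0,u] into [0,R]
  have hτ_range : ∀ v ∈ Set.Ioc (0:ℝ) u, φ (τ v) = deriv η (τ v) := by
    intro v hv
    have h1 : τ v = g v := hτ_eq v hv.2
    have h2 : 0 ≤ τ v := le_trans hv.1.le (hτ_ge v hv.1.le)
    have h3 : τ v ≤ R := by rw [h1]; exact hg_le_R v
    simp only [hφdef]
    rw [min_eq_left h3, max_eq_right h2]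
  have hη'int : IntegrableOn (deriv η) (Set.Ioc 0 u) := by
    have := hηm.intervalIntegrable (μ := volume) (a := 0) (b := u)
    rwa [intervalIntegrable_iff_integrableOn_Ioc_of_le hu0] at this
  have hφτint : IntegrableOn (fun v => φ (τ v)) (Set.Ioc 0 u) := by
    have hb : ∀ v, |φ v| ≤ max |deriv η 0| |deriv η R| := by
      intro v
      have hcl : (0:ℝ) ≤ max 0 (min v R) := le_max_left _ _
      have hcr : max 0 (min v R) ≤ R := max_le hR0 (min_le_right _ _)
      have := hηm hcl
      have h2 := hηm hcr
      rw [abs_le]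
      constructor
      · calc -(max |deriv η 0| |deriv η R|) ≤ -|deriv η 0| :=
              neg_le_neg (le_max_left _ _)
          _ ≤ deriv η 0 := neg_abs_le _
          _ ≤ φ v := this
      · calc φ v ≤ deriv η R := h2
          _ ≤ |deriv η R| := le_abs_self _
          _ ≤ max |deriv η 0| |deriv η R| := le_max_right _ _
    refine Integrable.mono' (integrable_const (max |deriv η 0| |deriv η R|))
      ((hφ_meas.comp hτ_meas).aestronglyMeasurable) ?_
    exact Eventually.of_forall fun v => hb (τ v)
  have hstep : (∫ v in Set.Ioc (0:ℝ) u, deriv η v) ≤ ∫ v in Set.Ioc (0:ℝ) u, φ (τ v) := by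
    refine setIntegral_mono_on hη'int hφτint measurableSet_Ioc fun v hv => ?_
    rw [hτ_range v hv]
    exact hηm (hτ_ge v hv.1.le)
  calc (∫ v in Set.Ioi (0:ℝ),
      deriv η v * Set.indicator (Set.Icc 0 u) (fun _ => (1:ℝ)) v)
      = ∫ v in Set.Ioc (0:ℝ) u, deriv η v := hind (deriv η)
    _ ≤ ∫ v in Set.Ioc (0:ℝ) u, φ (τ v) := hstep
    _ = ∫ v in Set.Ioi (0:ℝ), φ v * f v := key φ hφ_meas
    _ = ∫ v in Set.Ioi (0:ℝ), deriv η v * f v := by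
        refine setIntegral_congr_fun measurableSet_Ioi fun v hv => ?_
        rcases le_or_gt v R with h | h
        · simp only [hφdef]
          rw [min_eq_left h, max_eq_right (le_of_lt hv)]
        · rw [hfR v h, mul_zero, mul_zero]

end
end

section
/- Let η : ℝ → ℝ be convex and differentiable, and let A₁ ⊂ [0,∞) and A₂ ⊂ (−∞,0] be bounded Lebesgue-measurable sets with measures |A₁| and |A₂|. Let χ denote the signed indicator of the interval between 0 and |A₁| − |A₂|, i.e. χ = 1_{[0, |A₁|−|A₂|]} if |A₁| ≥ |A₂| and χ = −1_{[|A₁|−|A₂|, 0]} otherwise. Then ∫ η′(v) χ(v) dv ≤ ∫ η′(v) ( 1_{A₁}(v) − 1_{A₂}(v) ) dv. -/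
open MeasureTheory Real Filter Topology

noncomputable section

lemma mono_integrableOn {f : ℝ → ℝ} (hf : Monotone f) {A : Set ℝ}
    (hb : Bornology.IsBounded A) : IntegrableOn f A := by
  obtain ⟨R, hR⟩ := hb.subset_closedBall 0
  have h1 : IntegrableOn f (Set.Icc (-R) R) :=
    (hf.monotoneOn _).integrableOn_isCompact isCompact_Icc
  exact h1.mono_set (by simpa [Real.closedBall_eq_Icc] using hR)

lemma rearrange_core {f : ℝ → ℝ} (hf : Monotone f) {A I : Set ℝ} (hmA : MeasurableSet A)
    (hmI : MeasurableSet I) (hbA : Bornology.IsBounded A) (hbI : Bornology.IsBounded I)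
    (hvol : volume I = volume A) (c : ℝ)
    (hS : ∀ x ∈ A \ I, c ≤ f x) (hT : ∀ x ∈ I \ A, f x ≤ c) :
    ∫ v in I, f v ≤ ∫ v in A, f v := by
  have hintA : IntegrableOn f A := mono_integrableOn hf hbA
  have hintI : IntegrableOn f I := mono_integrableOn hf hbI
  have hfinA : volume A < ⊤ := hbA.measure_lt_top
  have hfinI : volume I < ⊤ := hbI.measure_lt_top
  have h1 : (∫ v in A ∩ I, f v) + ∫ v in A \ I, f v = ∫ v in A, f v :=
    integral_inter_add_diff hmI hintA
  have h2 : (∫ v in A ∩ I, f v) + ∫ v in I \ A, f v = ∫ v in I, f v := by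
    rw [Set.inter_comm]
    exact integral_inter_add_diff hmA hintI
  have m1 : volume (A ∩ I) + volume (A \ I) = volume A := measure_inter_add_diff A hmI
  have m2 : volume (A ∩ I) + volume (I \ A) = volume I := by
    rw [Set.inter_comm]; exact measure_inter_add_diff I hmA
  have hfinAI : volume (A ∩ I) ≠ ⊤ :=
    ((measure_mono Set.inter_subset_left).trans_lt hfinA).ne
  have hmeq : volume (A \ I) = volume (I \ A) := by
    have : volume (A ∩ I) + volume (A \ I) = volume (A ∩ I) + volume (I \ A) := by
      rw [m1, m2, hvol]
    exact (ENNReal.add_right_inj hfinAI).mp this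
  have hb1 : c * (volume (A \ I)).toReal ≤ ∫ v in A \ I, f v :=
    setIntegral_ge_of_const_le_real (hmA.diff hmI)
      ((measure_mono Set.diff_subset).trans_lt hfinA).ne hS
      (hintA.mono_set Set.diff_subset)
  have hb2 : (∫ v in I \ A, f v) ≤ c * (volume (I \ A)).toReal := by
    have := setIntegral_mono_on (hintI.mono_set Set.diff_subset)
      (integrableOn_const (((measure_mono Set.diff_subset).trans_lt hfinI).ne)) 
      (hmI.diff hmA) hT
    exact (by simpa [setIntegral_const, mul_comm] using this : _ ≤ c * volume.real (I \ A))
  rw [hmeq] at hb1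
  linarith

lemma icc_integral_eq {f : ℝ → ℝ} {p q : ℝ} (hpq : p ≤ q) :
    ∫ v in Set.Icc p q, f v = ∫ x in p..q, f x := by
  rw [intervalIntegral.integral_of_le hpq, integral_Icc_eq_integral_Ioc]

lemma shift_le {f : ℝ → ℝ} (hf : Monotone f) {c d L : ℝ} (hcd : c ≤ d) (hL : 0 ≤ L) :
    ∫ v in Set.Icc c (c + L), f v ≤ ∫ v in Set.Icc d (d + L), f v := by
  have hmon2 : Monotone (fun x => f (x + (d - c))) :=
    fun x y hxy => hf (by linarith)
  have key : ∫ x in c..(c + L), f (x + (d - c)) = ∫ x in d..(d + L), f x := by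
    rw [intervalIntegral.integral_comp_add_right]
    congr 1 <;> ring
  have step : ∫ v in Set.Icc c (c + L), f v ≤ ∫ v in Set.Icc c (c + L), f (v + (d - c)) := by
    apply setIntegral_mono_on (mono_integrableOn hf (Metric.isBounded_Icc _ _))
      (mono_integrableOn hmon2 (Metric.isBounded_Icc _ _)) measurableSet_Icc
    intro x _
    exact hf (by linarith)
  calc ∫ v in Set.Icc c (c + L), f v ≤ ∫ v in Set.Icc c (c + L), f (v + (d - c)) := step
    _ = ∫ x in c..(c + L), f (x + (d - c)) := icc_integral_eq (by linarith)
    _ = ∫ x in d..(d + L), f x := key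
    _ = ∫ v in Set.Icc d (d + L), f v := (icc_integral_eq (by linarith)).symm

/-- **Brenier's convexity lemma**. -/
theorem brenier_convexity_lemma
    (η : ℝ → ℝ) (hconv : ConvexOn ℝ Set.univ η) (hdiff : ∀ v, DifferentiableAt ℝ η v)
    (A₁ A₂ : Set ℝ) (hm₁ : MeasurableSet A₁) (hm₂ : MeasurableSet A₂)
    (hb₁ : Bornology.IsBounded A₁) (hb₂ : Bornology.IsBounded A₂)
    (hs₁ : A₁ ⊆ Set.Ici 0) (hs₂ : A₂ ⊆ Set.Iic 0) :
    (∫ v, deriv η v * chiFn ((volume A₁).toReal - (volume A₂).toReal) v)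
      ≤ ∫ v, deriv η v *
          (Set.indicator A₁ (fun _ => (1 : ℝ)) v - Set.indicator A₂ (fun _ => (1 : ℝ)) v) := by
  set f := deriv η with hfdef
  have hfmono : Monotone f := by
    have h := hconv.monotoneOn_deriv (fun x _ => hdiff x)
    intro x y hxy
    exact h (Set.mem_univ x) (Set.mem_univ y) hxy
  set a := (volume A₁).toReal with hadef
  set b := (volume A₂).toReal with hbdef
  have ha : 0 ≤ a := ENNReal.toReal_nonneg
  have hb : 0 ≤ b := ENNReal.toReal_nonneg
  have hvol₁ : volume (Set.Icc 0 a) = volume A₁ := by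
    rw [Real.volume_Icc, sub_zero, hadef, ENNReal.ofReal_toReal hb₁.measure_lt_top.ne]
  have hvol₂ : volume (Set.Icc (-b) 0) = volume A₂ := by
    rw [Real.volume_Icc, zero_sub, neg_neg, hbdef, ENNReal.ofReal_toReal hb₂.measure_lt_top.ne]
  have hRHS : (∫ v, f v * (Set.indicator A₁ (fun _ => (1:ℝ)) v
        - Set.indicator A₂ (fun _ => (1:ℝ)) v))
      = (∫ v in A₁, f v) - ∫ v in A₂, f v := by
    have hi₁ : Integrable (A₁.indicator f) :=
      (integrable_indicator_iff hm₁).2 (mono_integrableOn hfmono hb₁)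
    have hi₂ : Integrable (A₂.indicator f) :=
      (integrable_indicator_iff hm₂).2 (mono_integrableOn hfmono hb₂)
    have heq : ∀ v, f v * (Set.indicator A₁ (fun _ => (1:ℝ)) v
        - Set.indicator A₂ (fun _ => (1:ℝ)) v) = A₁.indicator f v - A₂.indicator f v := by
      intro v
      by_cases h1 : v ∈ A₁ <;> by_cases h2 : v ∈ A₂ <;>
        simp [Set.indicator_apply, h1, h2]
    simp_rw [heq]
    rw [integral_sub hi₁ hi₂, integral_indicator hm₁, integral_indicator hm₂]
  have key₁ : ∫ v in Set.Icc 0 a, f v ≤ ∫ v in A₁, f v := by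
    apply rearrange_core hfmono hm₁ measurableSet_Icc hb₁ (Metric.isBounded_Icc _ _) hvol₁ (f a)
    · intro x hx
      refine hfmono ?_
      by_contra h
      push_neg at h
      exact hx.2 ⟨hs₁ hx.1, h.le⟩
    · intro x hx
      exact hfmono hx.1.2
  have key₂ : ∫ v in A₂, f v ≤ ∫ v in Set.Icc (-b) 0, f v := by
    apply rearrange_core hfmono measurableSet_Icc hm₂ (Metric.isBounded_Icc _ _) hb₂
      hvol₂.symm (f (-b))
    · intro x hx
      exact hfmono hx.1.1
    · intro x hx
      refine hfmono ?_
      by_contra h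
      push_neg at h
      exact hx.2 ⟨h.le, hs₂ hx.1⟩
  set u := a - b with hu
  by_cases hcase : 0 ≤ u
  · have hLHS : (∫ v, f v * chiFn u v) = ∫ v in Set.Icc 0 u, f v := by
      have heq : ∀ v, f v * chiFn u v = (Set.Icc 0 u).indicator f v := by
        intro v
        simp only [chiFn, if_pos hcase]
        by_cases h : v ∈ Set.Icc 0 u <;> simp [Set.indicator_apply, h]
      simp_rw [heq]
      rw [integral_indicator measurableSet_Icc]
    have hsplit : ∫ v in Set.Icc 0 a, f v
        = (∫ v in Set.Icc 0 u, f v) + ∫ v in Set.Icc u a, f v := by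
      rw [icc_integral_eq ha, icc_integral_eq hcase, icc_integral_eq (by linarith : u ≤ a)]
      exact (intervalIntegral.integral_add_adjacent_intervals
        hfmono.intervalIntegrable hfmono.intervalIntegrable).symm
    have hshift : ∫ v in Set.Icc (-b) 0, f v ≤ ∫ v in Set.Icc u a, f v := by
      have h := shift_le hfmono (c := -b) (d := u) (by linarith) hb
      have e1 : -b + b = (0:ℝ) := by ring
      have e2 : u + b = a := by rw [hu]; ring
      rwa [e1, e2] at h
    rw [hLHS, hRHS]
    linarith
  · push_neg at hcase
    have hLHS : (∫ v, f v * chiFn u v) = -∫ v in Set.Icc u 0, f v := by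
      have heq : ∀ v, f v * chiFn u v = -(Set.Icc u 0).indicator f v := by
        intro v
        simp only [chiFn, if_neg (not_le.mpr hcase)]
        by_cases h : v ∈ Set.Icc u 0 <;> simp [Set.indicator_apply, h]
      simp_rw [heq]
      rw [integral_neg, integral_indicator measurableSet_Icc]
    have hsplit : ∫ v in Set.Icc (-b) 0, f v
        = (∫ v in Set.Icc (-b) u, f v) + ∫ v in Set.Icc u 0, f v := by
      rw [icc_integral_eq (by linarith : -b ≤ (0:ℝ)), icc_integral_eq (by linarith : -b ≤ u),
        icc_integral_eq hcase.le]
      exact (intervalIntegral.integral_add_adjacent_intervals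
        hfmono.intervalIntegrable hfmono.intervalIntegrable).symm
    have hshift : ∫ v in Set.Icc (-b) u, f v ≤ ∫ v in Set.Icc 0 a, f v := by
      have h := shift_le hfmono (c := -b) (d := 0) (by linarith) ha
      have e1 : -b + a = u := by rw [hu]; ring
      have e2 : (0:ℝ) + a = a := by ring
      rwa [e1, e2] at h
    rw [hLHS, hRHS]
    linarith

end
end

section
/- Let η : ℝ → ℝ be convex and differentiable with η(0) = 0, η′(v) ≥ 0 for v ≥ 0 and η′(v) ≤ 0 for v ≤ 0. Then for every bounded measurable set A₁ ⊂ [0,∞): ∫_{A₁} η′(v) dv ≥ η(|A₁|); and for every bounded measurable set A₂ ⊂ (−∞,0]: ∫_{A₂} η′(v) dv ≤ −η(−|A₂|). (Here |·| denotes Lebesgue measure; these are the rearrangement inequalities used to prove the convexity lemma of Brenier.) -/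
open MeasureTheory Real Filter Topology

noncomputable section

/-- First rearrangement inequality, as a standalone lemma. -/
lemma rearrangement_part1
    (η : ℝ → ℝ) (hconv : ConvexOn ℝ Set.univ η) (hdiff : ∀ v, DifferentiableAt ℝ η v)
    (h0 : η 0 = 0) :
    ∀ A : Set ℝ, MeasurableSet A → Bornology.IsBounded A → A ⊆ Set.Ici 0 →
      η ((volume A).toReal) ≤ ∫ v in A, deriv η v := by
  intro A hA hAb hA0
  have hmono : Monotone (deriv η) :=
    monotoneOn_univ.mp (hconv.monotoneOn_deriv (fun x _ => hdiff x))
  have hfin : volume A < ⊤ := hAb.measure_lt_top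
  set m : ℝ := (volume A).toReal with hm_def
  have hm : 0 ≤ m := ENNReal.toReal_nonneg
  have hvolA : volume A = ENNReal.ofReal m := (ENNReal.ofReal_toReal hfin.ne).symm
  -- A is contained in a compact interval where deriv η is integrable
  obtain ⟨R, hR⟩ := hAb.subset_closedBall 0
  have hRIcc : A ⊆ Set.Icc (-(max R m)) (max R m) := by
    intro x hx
    have := hR hx
    rw [Metric.mem_closedBall, Real.dist_eq, sub_zero] at this
    have := abs_le.mp this
    have hM : (0:ℝ) ≤ max R m := le_trans hm (le_max_right R m)
    constructor
    · linarith [this.1, le_max_left R m]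
    · linarith [this.2, le_max_left R m]
  have hint_big : IntegrableOn (deriv η) (Set.Icc (-(max R m)) (max R m)) :=
    (hmono.monotoneOn _).integrableOn_isCompact isCompact_Icc
  have hIccsub : Set.Icc (0:ℝ) m ⊆ Set.Icc (-(max R m)) (max R m) := by
    intro x hx
    have hM : (0:ℝ) ≤ max R m := le_trans hm (le_max_right R m)
    constructor
    · linarith [hx.1]
    · exact hx.2.trans (le_max_right R m)
  set B : Set ℝ := A ∩ Set.Icc 0 m with hB_def
  set C : Set ℝ := A \ Set.Icc 0 m with hC_def
  set D : Set ℝ := Set.Icc 0 m \ A with hD_def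
  have hBm : MeasurableSet B := hA.inter measurableSet_Icc
  have hCm : MeasurableSet C := hA.diff measurableSet_Icc
  have hDm : MeasurableSet D := measurableSet_Icc.diff hA
  have hintA : IntegrableOn (deriv η) A := hint_big.mono_set hRIcc
  have hintIcc : IntegrableOn (deriv η) (Set.Icc 0 m) := hint_big.mono_set hIccsub
  have hintB : IntegrableOn (deriv η) B := hintA.mono_set Set.inter_subset_left
  have hintC : IntegrableOn (deriv η) C := hintA.mono_set Set.diff_subset
  have hintD : IntegrableOn (deriv η) D := hintIcc.mono_set Set.diff_subset
  have hvolIcc : volume (Set.Icc (0:ℝ) m) = ENNReal.ofReal m := by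
    rw [Real.volume_Icc, sub_zero]
  have hvolBfin : volume B ≠ ⊤ :=
    ((measure_mono Set.inter_subset_left).trans_lt hfin).ne
  have hvolC : volume C = ENNReal.ofReal m - volume B := by
    rw [hC_def, ← Set.diff_self_inter, measure_diff Set.inter_subset_left hBm.nullMeasurableSet
      hvolBfin, ← hvolA]
  have hvolD : volume D = ENNReal.ofReal m - volume B := by
    have hBI : B = A ∩ Set.Icc 0 m := hB_def
    have h1 : D = Set.Icc 0 m \ B := by
      rw [hD_def, hBI, Set.diff_inter_self_eq_diff]
    rw [h1, measure_diff (hBI ▸ Set.inter_subset_right) hBm.nullMeasurableSet hvolBfin, hvolIcc]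
  have hCD : volume C = volume D := by rw [hvolC, hvolD]
  have hvolCfin : volume C < ⊤ := (measure_mono Set.diff_subset).trans_lt hfin
  have hvolDfin : volume D < ⊤ := by rw [← hCD]; exact hvolCfin
  -- lower bound on C : every point of C is > m
  have hClb : ∀ v ∈ C, deriv η m ≤ deriv η v := by
    intro v hv
    have hv0 : 0 ≤ v := hA0 hv.1
    have : ¬ (v ≤ m) := fun h => hv.2 ⟨hv0, h⟩
    exact hmono (le_of_lt (lt_of_not_ge this))
  have hDub : ∀ v ∈ D, deriv η v ≤ deriv η m := fun v hv => hmono hv.1.2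
  have hCbound : deriv η m * (volume C).toReal ≤ ∫ v in C, deriv η v := by
    have h1 : ∫ v in C, deriv η m ≤ ∫ v in C, deriv η v :=
      setIntegral_mono_on (integrableOn_const hvolCfin.ne) hintC hCm hClb
    rwa [setIntegral_const, smul_eq_mul, mul_comm] at h1
  have hDbound : ∫ v in D, deriv η v ≤ deriv η m * (volume D).toReal := by
    have h1 : ∫ v in D, deriv η v ≤ ∫ v in D, deriv η m :=
      setIntegral_mono_on hintD (integrableOn_const hvolDfin.ne) hDm hDub
    rwa [setIntegral_const, smul_eq_mul, mul_comm] at h1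
  -- split the integrals
  have hsplitA : ∫ v in A, deriv η v = (∫ v in B, deriv η v) + ∫ v in C, deriv η v := by
    rw [← setIntegral_union (Set.disjoint_of_subset_left Set.inter_subset_right
      disjoint_sdiff_self_right) hCm hintB hintC, Set.inter_union_diff]
  have hsplitIcc : ∫ v in Set.Icc 0 m, deriv η v
      = (∫ v in B, deriv η v) + ∫ v in D, deriv η v := by
    have : B ∪ D = Set.Icc 0 m := by
      rw [hB_def, hD_def, Set.inter_comm, Set.inter_union_diff]
    rw [← this, setIntegral_union (Set.disjoint_of_subset_left Set.inter_subset_left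
      disjoint_sdiff_self_right) hDm hintB hintD]
  -- fundamental theorem of calculus
  have hftc : ∫ v in Set.Icc 0 m, deriv η v = η m := by
    rw [MeasureTheory.integral_Icc_eq_integral_Ioc,
      ← intervalIntegral.integral_of_le hm,
      intervalIntegral.integral_deriv_eq_sub (fun x _ => hdiff x)
        (hmono.intervalIntegrable), h0, sub_zero]
  calc η m = ∫ v in Set.Icc 0 m, deriv η v := hftc.symm
    _ = (∫ v in B, deriv η v) + ∫ v in D, deriv η v := hsplitIcc
    _ ≤ (∫ v in B, deriv η v) + deriv η m * (volume D).toReal := by linarith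
    _ = (∫ v in B, deriv η v) + deriv η m * (volume C).toReal := by rw [hCD]
    _ ≤ (∫ v in B, deriv η v) + ∫ v in C, deriv η v := by linarith
    _ = ∫ v in A, deriv η v := hsplitA.symm

/-- **Rearrangement inequalities** used in the proof of Brenier's convexity lemma. -/
theorem rearrangement_inequalities
    (η : ℝ → ℝ) (hconv : ConvexOn ℝ Set.univ η) (hdiff : ∀ v, DifferentiableAt ℝ η v)
    (h0 : η 0 = 0)
    (hpos : ∀ v, 0 ≤ v → 0 ≤ deriv η v) (hneg : ∀ v, v ≤ 0 → deriv η v ≤ 0) :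
    (∀ A₁ : Set ℝ, MeasurableSet A₁ → Bornology.IsBounded A₁ → A₁ ⊆ Set.Ici 0 →
      η ((volume A₁).toReal) ≤ ∫ v in A₁, deriv η v) ∧
    (∀ A₂ : Set ℝ, MeasurableSet A₂ → Bornology.IsBounded A₂ → A₂ ⊆ Set.Iic 0 →
      (∫ v in A₂, deriv η v) ≤ -η (-(volume A₂).toReal)) := by
  constructor
  · exact rearrangement_part1 η hconv hdiff h0
  · intro A hA hAb hA0
    -- apply part 1 to ζ v := η (-v) and -A
    set ζ : ℝ → ℝ := fun v => η (-v) with hζ_def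
    have hζconv : ConvexOn ℝ Set.univ ζ := by
      have := hconv.comp_affineMap (-(AffineMap.id ℝ ℝ))
      simpa [hζ_def, Function.comp_def] using this
    have hζderiv : ∀ v, HasDerivAt ζ (-deriv η (-v)) v := by
      intro v
      have h1 : HasDerivAt (fun v : ℝ => -v) (-1) v := (hasDerivAt_id v).neg
      have h2 := ((hdiff (-v)).hasDerivAt).comp v h1
      simpa [mul_comm, hζ_def, Function.comp_def] using h2
    have hζdiff : ∀ v, DifferentiableAt ℝ ζ v := fun v => (hζderiv v).differentiableAt
    have hζderiv' : ∀ v, deriv ζ v = -deriv η (-v) := fun v => (hζderiv v).deriv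
    have hζ0 : ζ 0 = 0 := by simp [hζ_def, h0]
    have hnegA : MeasurableSet (-A) := hA.neg
    have hnegAb : Bornology.IsBounded (-A) := by
      simpa using hAb.neg
    have hnegA0 : -A ⊆ Set.Ici 0 := by
      intro x hx
      exact Set.mem_Ici.mpr (neg_nonpos.mp (hA0 (Set.mem_neg.mp hx)))
    have hmp : MeasurePreserving (Neg.neg : ℝ → ℝ) volume volume :=
      Measure.measurePreserving_neg _
    have hvol : volume (-A) = volume A := hmp.measure_preimage hA.nullMeasurableSet
    have key := rearrangement_part1 ζ hζconv hζdiff hζ0 (-A) hnegA hnegAb hnegA0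
    rw [hvol] at key
    -- change of variables : ∫ in -A, deriv ζ = -∫ in A, deriv η
    have hcov : ∫ v in -A, deriv ζ v = -∫ v in A, deriv η v := by
      have hemb : MeasurableEmbedding (Neg.neg : ℝ → ℝ) :=
        (MeasurableEquiv.neg ℝ).measurableEmbedding
      have himg : -A = (Neg.neg : ℝ → ℝ) '' A := by
        rw [Set.image_neg_eq_neg]
      rw [himg, hmp.setIntegral_image_emb hemb]
      simp [hζderiv', integral_neg]
    rw [hcov] at key
    have : η (-(volume A).toReal) ≤ -∫ v in A, deriv η v := by
      simpa [hζ_def] using key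
    linarith

end
end

section
/- Let M > 0, ε > 0, and let f : (0,M) → [0,1] be measurable with u = ∫₀^M f(v) dv. Then ∫₀^M v ( f(v) − 1_{[0,u]}(v) ) dv ≥ 0, and if moreover ∫₀^M v ( f(v) − 1_{[0,u]}(v) ) dv ≤ ε u²/2 (i.e. D(f) ≤ ε), then for every Lipschitz function g : [0,M] → ℝ with Lipschitz constant L: | ∫₀^M g(v) ( f(v) − 1_{[0,u]}(v) ) dv | ≤ L ε u² / 2. -/
open MeasureTheory Real Filter Topology

noncomputable section

/-- **Smallness of the deviation controls all Lipschitz moments.** -/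
theorem deviation_controls_lipschitz_moments
    (M ε : ℝ) (hM : 0 < M) (hε : 0 < ε)
    (f : ℝ → ℝ) (hfm : Measurable f)
    (hfr : ∀ᵐ v ∂(volume.restrict (Set.Ioc (0 : ℝ) M)), f v ∈ Set.Icc (0 : ℝ) 1)
    (u : ℝ) (hu : u = ∫ v in Set.Ioc (0 : ℝ) M, f v) :
    0 ≤ (∫ v in Set.Ioc (0 : ℝ) M,
          v * (f v - Set.indicator (Set.Icc 0 u) (fun _ => (1 : ℝ)) v)) ∧
    ((∫ v in Set.Ioc (0 : ℝ) M,
        v * (f v - Set.indicator (Set.Icc 0 u) (fun _ => (1 : ℝ)) v)) ≤ ε * u ^ 2 / 2 →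
      ∀ (L : NNReal) (g : ℝ → ℝ), LipschitzOnWith L g (Set.Icc 0 M) →
        |∫ v in Set.Ioc (0 : ℝ) M,
            g v * (f v - Set.indicator (Set.Icc 0 u) (fun _ => (1 : ℝ)) v)|
          ≤ (L : ℝ) * ε * u ^ 2 / 2) := by
  set s : Set ℝ := Set.Ioc (0:ℝ) M with hs
  set μ := volume.restrict s with hμdef
  haveI : IsFiniteMeasure μ := by
    constructor
    rw [hμdef, Measure.restrict_apply_univ, hs, Real.volume_Ioc]
    exact ENNReal.ofReal_lt_top
  set χ : ℝ → ℝ := Set.indicator (Set.Icc 0 u) (fun _ => (1:ℝ)) with hχ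
  have hχm : Measurable χ := measurable_const.indicator measurableSet_Icc
  have hχ01 : ∀ v, χ v = 0 ∨ χ v = 1 := by
    intro v
    by_cases hv : v ∈ Set.Icc (0:ℝ) u
    · right; exact Set.indicator_of_mem hv _
    · left; exact Set.indicator_of_notMem hv _
  have hfint : Integrable f μ := by
    refine Integrable.mono' (integrable_const 1) hfm.aestronglyMeasurable ?_
    filter_upwards [hfr] with v hv
    rw [Real.norm_eq_abs, abs_le]; exact ⟨by linarith [hv.1], hv.2⟩
  have hu0 : 0 ≤ u := by
    rw [hu]
    refine integral_nonneg_of_ae ?_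
    filter_upwards [hfr] with v hv; exact hv.1
  have huM : u ≤ M := by
    rw [hu]
    calc (∫ v in s, f v) ≤ ∫ _ in s, (1:ℝ) := by
          refine integral_mono_ae hfint (integrable_const 1) ?_
          filter_upwards [hfr] with v hv; exact hv.2
      _ = M := by
          rw [setIntegral_const, smul_eq_mul, mul_one, hs, Real.volume_real_Ioc_of_le hM.le]
          rw [sub_zero]
  have hχint : Integrable χ μ := (integrable_const 1).indicator measurableSet_Icc
  have hχval : ∫ v in s, χ v = u := by
    rw [hχ, setIntegral_indicator measurableSet_Icc]
    have hinter : s ∩ Set.Icc 0 u = Set.Ioc 0 u := by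
      ext x
      simp only [hs, Set.mem_inter_iff, Set.mem_Ioc, Set.mem_Icc]
      constructor
      · rintro ⟨⟨h1, _⟩, _, h4⟩; exact ⟨h1, h4⟩
      · rintro ⟨h1, h2⟩; exact ⟨⟨h1, h2.trans huM⟩, h1.le, h2⟩
    rw [hinter, setIntegral_const, smul_eq_mul, mul_one, Real.volume_real_Ioc_of_le hu0, sub_zero]
  have hhint : Integrable (fun v => f v - χ v) μ := hfint.sub hχint
  have hh0 : ∫ v in s, (f v - χ v) = 0 := by
    rw [integral_sub hfint hχint, hχval, ← hu, sub_self]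
  have hhbd : ∀ᵐ v ∂μ, |f v - χ v| ≤ 1 := by
    filter_upwards [hfr] with v hv
    rcases hχ01 v with h | h <;> rw [h, abs_le] <;> constructor <;> linarith [hv.1, hv.2]
  have hvh' : Integrable (fun v => v * (f v - χ v)) μ := by
    refine Integrable.mono' (integrable_const M) ?_ ?_
    · exact (measurable_id.mul (hfm.sub hχm)).aestronglyMeasurable
    · filter_upwards [hhbd, ae_restrict_mem measurableSet_Ioc] with v hb hvs
      rw [Real.norm_eq_abs, abs_mul]
      have h1 : |v| ≤ M := by rw [abs_le]; exact ⟨by linarith [hvs.1], hvs.2⟩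
      nlinarith [abs_nonneg v, abs_nonneg (f v - χ v)]
  have hvh : Integrable (fun v => (v - u) * (f v - χ v)) μ := by
    have : (fun v => (v - u) * (f v - χ v)) =
        fun v => v * (f v - χ v) - u * (f v - χ v) := by funext v; ring
    rw [this]
    exact hvh'.sub (hhint.const_mul u)
  have hptwise : ∀ᵐ v ∂μ, 0 ≤ (v - u) * (f v - χ v) := by
    filter_upwards [hfr, ae_restrict_mem measurableSet_Ioc] with v hv hvs
    rcases le_or_gt v u with h | h
    · have hχ1 : χ v = 1 := Set.indicator_of_mem (show v ∈ Set.Icc 0 u from ⟨hvs.1.le, h⟩) _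
      rw [hχ1]; nlinarith [hv.2]
    · have hχ0 : χ v = 0 := Set.indicator_of_notMem
        (fun hmem => absurd hmem.2 (not_le.mpr h)) _
      rw [hχ0]; nlinarith [hv.1]
  have key : 0 ≤ ∫ v in s, (v - u) * (f v - χ v) := integral_nonneg_of_ae hptwise
  have heq : ∫ v in s, (v - u) * (f v - χ v) = ∫ v in s, v * (f v - χ v) := by
    simp_rw [sub_mul]
    rw [integral_sub hvh' (hhint.const_mul u), integral_const_mul, hh0, mul_zero, sub_zero]
  constructor
  · rw [← heq]; exact key
  · intro hD L g hg
    have huIcc : u ∈ Set.Icc (0:ℝ) M := ⟨hu0, huM⟩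
    have hgm : AEStronglyMeasurable g μ :=
      (hg.continuousOn.mono Set.Ioc_subset_Icc_self).aestronglyMeasurable measurableSet_Ioc
    have hgb : Integrable (fun v => g v * (f v - χ v)) μ := by
      refine Integrable.mono' (integrable_const (|g 0| + (L:ℝ) * M)) ?_ ?_
      · exact hgm.mul (hfm.sub hχm).aestronglyMeasurable
      · filter_upwards [hhbd, ae_restrict_mem measurableSet_Ioc] with v hb hvs
        rw [Real.norm_eq_abs, abs_mul]
        have hvIcc : v ∈ Set.Icc (0:ℝ) M := ⟨hvs.1.le, hvs.2⟩
        have h0Icc : (0:ℝ) ∈ Set.Icc (0:ℝ) M := ⟨le_refl 0, hM.le⟩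
        have hd : |g v - g 0| ≤ (L:ℝ) * |v - 0| := by
          have := hg.dist_le_mul v hvIcc 0 h0Icc
          rwa [Real.dist_eq, Real.dist_eq] at this
        have h1 : |g v| ≤ |g 0| + (L:ℝ) * M := by
          have h2 : |g v| ≤ |g 0| + |g v - g 0| := by
            have := abs_add_le (g 0) (g v - g 0); simpa using this
          have h3 : (L:ℝ) * |v - 0| ≤ (L:ℝ) * M := by
            apply mul_le_mul_of_nonneg_left _ L.coe_nonneg
            rw [sub_zero, abs_le]; exact ⟨by linarith [hvs.1], hvs.2⟩
          linarith
        nlinarith [abs_nonneg (g v), abs_nonneg (f v - χ v),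
          abs_nonneg (g 0), L.coe_nonneg, mul_nonneg L.coe_nonneg hM.le]
    have step1 : ∫ v in s, g v * (f v - χ v) = ∫ v in s, (g v - g u) * (f v - χ v) := by
      simp_rw [sub_mul]
      rw [integral_sub hgb (hhint.const_mul (g u)), integral_const_mul, hh0, mul_zero, sub_zero]
    rw [step1]
    have step2 : |∫ v in s, (g v - g u) * (f v - χ v)|
        ≤ ∫ v in s, (L:ℝ) * ((v - u) * (f v - χ v)) := by
      calc |∫ v in s, (g v - g u) * (f v - χ v)|
          ≤ ∫ v in s, |(g v - g u) * (f v - χ v)| := by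
            simpa only [Real.norm_eq_abs] using
              norm_integral_le_integral_norm (μ := μ) (fun v => (g v - g u) * (f v - χ v))
        _ ≤ ∫ v in s, (L:ℝ) * ((v - u) * (f v - χ v)) := by
            refine integral_mono_of_nonneg (ae_of_all _ fun v => abs_nonneg _)
              (hvh.const_mul _) ?_
            filter_upwards [hptwise, ae_restrict_mem measurableSet_Ioc] with v hpt hvs
            have hvIcc : v ∈ Set.Icc (0:ℝ) M := ⟨hvs.1.le, hvs.2⟩
            have hd : |g v - g u| ≤ (L:ℝ) * |v - u| := by
              have := hg.dist_le_mul v hvIcc u huIcc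
              rwa [Real.dist_eq, Real.dist_eq] at this
            calc |(g v - g u) * (f v - χ v)| = |g v - g u| * |f v - χ v| := abs_mul _ _
              _ ≤ ((L:ℝ) * |v - u|) * |f v - χ v| :=
                  mul_le_mul_of_nonneg_right hd (abs_nonneg _)
              _ = (L:ℝ) * |(v - u) * (f v - χ v)| := by rw [abs_mul]; ring
              _ = (L:ℝ) * ((v - u) * (f v - χ v)) := by rw [abs_of_nonneg hpt]
    rw [integral_const_mul, heq] at step2
    calc |∫ v in s, (g v - g u) * (f v - χ v)|
        ≤ (L:ℝ) * ∫ v in s, v * (f v - χ v) := step2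
      _ ≤ (L:ℝ) * (ε * u ^ 2 / 2) := mul_le_mul_of_nonneg_left hD L.coe_nonneg
      _ = (L:ℝ) * ε * u ^ 2 / 2 := by ring

end
end

section
/- Let d ≥ 1, M > 0, ε > 0, r > 0, and let X = L¹(ℝ^d × [0,M]). Then the regularized collision operator L^r maps X to X and is uniformly Lipschitz on X: there exists a constant C > 0 (depending only on M, ε, r and the Lipschitz constant of 1^r) such that for all f, g ∈ X, ‖L^r(f) − L^r(g)‖_{L¹(ℝ^d × [0,M])} ≤ C ‖f − g‖_{L¹(ℝ^d × [0,M])}. -/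
open MeasureTheory Real Filter Topology

noncomputable section

/-- The reference measure on `ℝ^d × [0,M]`, i.e. the underlying measure of
`X = L¹(ℝ^d × [0,M])`. -/
def nuM (d : ℕ) (M : ℝ) : Measure (EuclideanSpace ℝ (Fin d) × ℝ) :=
  (volume : Measure (EuclideanSpace ℝ (Fin d))).prod
    ((volume : Measure ℝ).restrict (Set.Icc 0 M))

/-- The cut-off `w(s) = s·1_{[0,1]}(s) + 1_{{s>1}}(s)`. -/
def wcut (s : ℝ) : ℝ := min (max s 0) 1

/-- Equilibrium projection on `[0,M]`: `Π_g = 1_{[0, ∫₀^M g]}`. -/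
def PiM (M : ℝ) (g : ℝ → ℝ) : ℝ → ℝ :=
  Set.indicator (Set.Icc 0 (∫ v in Set.Icc (0 : ℝ) M, g v)) (fun _ => (1 : ℝ))

/-- The regularized collision operator `L^r` (with smoothed Heaviside `oneR`). -/
def Lr {d : ℕ} (M ε : ℝ) (oneR : ℝ → ℝ)
    (f : EuclideanSpace ℝ (Fin d) × ℝ → ℝ) : EuclideanSpace ℝ (Fin d) × ℝ → ℝ :=
  fun p =>
    (PiM M (fun w => wcut (f (p.1, w))) p.2 - wcut (f p)) *
      oneR ((∫ v in Set.Icc (0 : ℝ) M,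
              v * (wcut (f (p.1, v)) - PiM M (fun w => wcut (f (p.1, w))) v)) -
            ε * ∫ v in Set.Icc (0 : ℝ) M, v * PiM M (fun w => wcut (f (p.1, w))) v)


open Set

/-! basic wcut/indicator lemmas -/

lemma wcut_mem_Icc (s : ℝ) : wcut s ∈ Icc (0:ℝ) 1 :=
  ⟨le_min (le_max_right _ _) zero_le_one, min_le_right _ _⟩

lemma abs_wcut_le (s : ℝ) : |wcut s| ≤ |s| := by
  rw [abs_of_nonneg (wcut_mem_Icc s).1]
  exact le_trans (min_le_left _ _) (max_le (le_abs_self s) (abs_nonneg s))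

lemma wcut_lip : LipschitzWith 1 wcut := (LipschitzWith.id.max_const 0).min_const 1

lemma abs_wcut_sub (a b : ℝ) : |wcut a - wcut b| ≤ |a - b| := by
  have := wcut_lip.dist_le_mul a b
  simpa [Real.dist_eq] using this

lemma ind_mem (a v : ℝ) : Set.indicator (Icc 0 a) (fun _ => (1:ℝ)) v ∈ Icc (0:ℝ) 1 := by
  by_cases h : v ∈ Icc (0:ℝ) a <;> simp [Set.indicator_apply, h]

lemma ind_int_abs {M a : ℝ} (ha : 0 ≤ a) :
    ∫ v in Icc (0:ℝ) M, |Set.indicator (Icc 0 a) (fun _ => (1:ℝ)) v| ≤ a := by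
  have h1 : ∀ v, |Set.indicator (Icc 0 a) (fun _ => (1:ℝ)) v|
      = Set.indicator (Icc 0 a) (fun _ => (1:ℝ)) v := fun v => abs_of_nonneg (ind_mem a v).1
  simp only [h1]
  rw [show (fun _ : ℝ => (1:ℝ)) = (1 : ℝ → ℝ) from rfl,
    integral_indicator_one measurableSet_Icc]
  have h2 : (volume.restrict (Icc (0:ℝ) M)) (Icc 0 a) ≤ ENNReal.ofReal a := by
    refine le_trans (Measure.restrict_apply_le _ _) ?_
    rw [Real.volume_Icc]
    exact ENNReal.ofReal_le_ofReal (by linarith)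
  calc ((volume.restrict (Icc (0:ℝ) M)) (Icc 0 a)).toReal
      ≤ (ENNReal.ofReal a).toReal := ENNReal.toReal_mono ENNReal.ofReal_ne_top h2
    _ = a := ENNReal.toReal_ofReal ha

lemma ind_int_diff_le {M a b : ℝ} (ha : 0 ≤ a) (hab : a ≤ b) :
    ∫ v in Icc (0:ℝ) M, |Set.indicator (Icc 0 a) (fun _ => (1:ℝ)) v -
      Set.indicator (Icc 0 b) (fun _ => (1:ℝ)) v| ≤ b - a := by
  have hpt : ∀ v, |Set.indicator (Icc 0 a) (fun _ => (1:ℝ)) v -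
      Set.indicator (Icc 0 b) (fun _ => (1:ℝ)) v|
      = Set.indicator (Ioc a b) (fun _ => (1:ℝ)) v := by
    intro v
    rcases lt_or_ge v 0 with h0 | h0
    · have n1 : v ∉ Icc (0:ℝ) a := fun h => absurd h.1 (not_le.2 h0)
      have n2 : v ∉ Icc (0:ℝ) b := fun h => absurd h.1 (not_le.2 h0)
      have n3 : v ∉ Ioc a b := fun h => absurd (ha.trans_lt h.1) (not_lt.2 h0.le)
      rw [Set.indicator_of_notMem n1, Set.indicator_of_notMem n2,
        Set.indicator_of_notMem n3]
      simp
    · rcases le_or_gt v a with hva | hva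
      · have m1 : v ∈ Icc (0:ℝ) a := ⟨h0, hva⟩
        have m2 : v ∈ Icc (0:ℝ) b := ⟨h0, hva.trans hab⟩
        have n3 : v ∉ Ioc a b := fun h => absurd hva (not_le.2 h.1)
        rw [Set.indicator_of_mem m1, Set.indicator_of_mem m2, Set.indicator_of_notMem n3]
        simp
      · rcases le_or_gt v b with hvb | hvb
        · have n1 : v ∉ Icc (0:ℝ) a := fun h => absurd h.2 (not_le.2 hva)
          have m2 : v ∈ Icc (0:ℝ) b := ⟨h0, hvb⟩
          have m3 : v ∈ Ioc a b := ⟨hva, hvb⟩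
          rw [Set.indicator_of_notMem n1, Set.indicator_of_mem m2, Set.indicator_of_mem m3]
          simp
        · have n1 : v ∉ Icc (0:ℝ) a := fun h => absurd h.2 (not_le.2 hva)
          have n2 : v ∉ Icc (0:ℝ) b := fun h => absurd h.2 (not_le.2 hvb)
          have n3 : v ∉ Ioc a b := fun h => absurd h.2 (not_le.2 hvb)
          rw [Set.indicator_of_notMem n1, Set.indicator_of_notMem n2,
            Set.indicator_of_notMem n3]
          simp
  simp only [hpt]
  rw [show (fun _ : ℝ => (1:ℝ)) = (1 : ℝ → ℝ) from rfl,
    integral_indicator_one measurableSet_Ioc]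
  have h2 : (volume.restrict (Icc (0:ℝ) M)) (Ioc a b) ≤ ENNReal.ofReal (b - a) := by
    refine le_trans (Measure.restrict_apply_le _ _) ?_
    rw [Real.volume_Ioc]
  calc ((volume.restrict (Icc (0:ℝ) M)) (Ioc a b)).toReal
      ≤ (ENNReal.ofReal (b - a)).toReal := ENNReal.toReal_mono ENNReal.ofReal_ne_top h2
    _ = b - a := ENNReal.toReal_ofReal (by linarith)

lemma ind_int_diff {M a b : ℝ} (ha : 0 ≤ a) (hb : 0 ≤ b) :
    ∫ v in Icc (0:ℝ) M, |Set.indicator (Icc 0 a) (fun _ => (1:ℝ)) v -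
      Set.indicator (Icc 0 b) (fun _ => (1:ℝ)) v| ≤ |a - b| := by
  rcases le_total a b with hab | hab
  · exact (ind_int_diff_le ha hab).trans (by rw [abs_sub_comm]; exact le_abs_self _)
  · have := ind_int_diff_le (M := M) hb hab
    simp only [abs_sub_comm (Set.indicator (Icc 0 a) _ _)] at this ⊢
    exact this.trans (le_abs_self _)

/-! per-function facts -/

def Ifn {d : ℕ} (M : ℝ) (f : EuclideanSpace ℝ (Fin d) × ℝ → ℝ)
    (x : EuclideanSpace ℝ (Fin d)) : ℝ :=
  ∫ v in Set.Icc (0:ℝ) M, wcut (f (x, v))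

def Afn {d : ℕ} (M ε : ℝ) (f : EuclideanSpace ℝ (Fin d) × ℝ → ℝ)
    (x : EuclideanSpace ℝ (Fin d)) : ℝ :=
  (∫ v in Set.Icc (0:ℝ) M, v * (wcut (f (x, v)) - PiM M (fun w => wcut (f (x, w))) v)) -
    ε * ∫ v in Set.Icc (0:ℝ) M, v * PiM M (fun w => wcut (f (x, w))) v

lemma PiM_eq {d : ℕ} (M : ℝ) (f : EuclideanSpace ℝ (Fin d) × ℝ → ℝ)
    (x : EuclideanSpace ℝ (Fin d)) (v : ℝ) :
    PiM M (fun w => wcut (f (x, w))) v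
      = Set.indicator (Set.Icc 0 (Ifn M f x)) (fun _ => (1:ℝ)) v := rfl

lemma Lr_eq {d : ℕ} (M ε : ℝ) (oneR : ℝ → ℝ) (f : EuclideanSpace ℝ (Fin d) × ℝ → ℝ)
    (p : EuclideanSpace ℝ (Fin d) × ℝ) :
    Lr M ε oneR f p
      = (PiM M (fun w => wcut (f (p.1, w))) p.2 - wcut (f p)) * oneR (Afn M ε f p.1) := rfl

lemma kappa_fin (M : ℝ) : IsFiniteMeasure ((volume : Measure ℝ).restrict (Set.Icc 0 M)) := by
  constructor
  rw [Measure.restrict_apply_univ, Real.volume_Icc]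
  exact ENNReal.ofReal_lt_top

variable {d : ℕ} {M ε : ℝ} {f : EuclideanSpace ℝ (Fin d) × ℝ → ℝ}

lemma wf_int (hf : Integrable f (nuM d M)) : Integrable (fun p => wcut (f p)) (nuM d M) := by
  refine Integrable.mono hf (wcut_lip.continuous.comp_aestronglyMeasurable hf.1) ?_
  exact Eventually.of_forall fun p => by simpa [Real.norm_eq_abs] using abs_wcut_le (f p)

lemma Ifn_nonneg (x : EuclideanSpace ℝ (Fin d)) : 0 ≤ Ifn M f x :=
  integral_nonneg fun v => (wcut_mem_Icc _).1

lemma Ifn_int (hf : Integrable f (nuM d M)) : Integrable (Ifn M f) volume :=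
  (wf_int hf).integral_prod_left

lemma PiM_asm (hf : Integrable f (nuM d M)) :
    AEStronglyMeasurable (fun p : EuclideanSpace ℝ (Fin d) × ℝ =>
      PiM M (fun w => wcut (f (p.1, w))) p.2) (nuM d M) := by
  haveI := kappa_fin M
  obtain ⟨I', hI'sm, hI'eq⟩ := (Ifn_int hf).1
  have hI'm : Measurable I' := hI'sm.measurable
  have hset : MeasurableSet {p : EuclideanSpace ℝ (Fin d) × ℝ | 0 ≤ p.2 ∧ p.2 ≤ I' p.1} :=
    (measurableSet_le measurable_const measurable_snd).inter
      (measurableSet_le measurable_snd (hI'm.comp measurable_fst))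
  have hmk : StronglyMeasurable (fun p : EuclideanSpace ℝ (Fin d) × ℝ =>
      if 0 ≤ p.2 ∧ p.2 ≤ I' p.1 then (1:ℝ) else 0) :=
    (Measurable.ite hset measurable_const measurable_const).stronglyMeasurable
  refine ⟨_, hmk, ?_⟩
  have hae : ∀ᵐ p ∂(nuM d M), I' p.1 = Ifn M f p.1 :=
    Measure.quasiMeasurePreserving_fst.ae (hI'eq.mono fun x hx => hx.symm)
  filter_upwards [hae] with p hp
  rw [PiM_eq, Set.indicator_apply]
  simp only [Set.mem_Icc, hp]

lemma PiM_int (hM : 0 < M) (hf : Integrable f (nuM d M)) :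
    Integrable (fun p : EuclideanSpace ℝ (Fin d) × ℝ =>
      PiM M (fun w => wcut (f (p.1, w))) p.2) (nuM d M) := by
  haveI := kappa_fin M
  refine (integrable_prod_iff (PiM_asm hf)).2 ⟨?_, ?_⟩
  · refine Eventually.of_forall fun x => ?_
    simp only [PiM_eq]
    exact (integrable_const (1:ℝ)).indicator measurableSet_Icc
  · refine Integrable.mono (Ifn_int hf) (PiM_asm hf).norm.integral_prod_right' ?_
    refine Eventually.of_forall fun x => ?_
    have h0 : (0:ℝ) ≤ ∫ v, ‖PiM M (fun w => wcut (f (x, w))) v‖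
        ∂((volume : Measure ℝ).restrict (Set.Icc 0 M)) :=
      integral_nonneg fun v => norm_nonneg _
    rw [Real.norm_eq_abs, abs_of_nonneg h0, Real.norm_eq_abs]
    refine le_trans ?_ (le_abs_self _)
    have : (∫ v, ‖PiM M (fun w => wcut (f (x, w))) v‖
        ∂((volume : Measure ℝ).restrict (Set.Icc 0 M)))
        = ∫ v in Set.Icc (0:ℝ) M, |Set.indicator (Set.Icc 0 (Ifn M f x)) (fun _ => (1:ℝ)) v| := by
      simp only [PiM_eq, Real.norm_eq_abs]
    rw [this]
    exact ind_int_abs (Ifn_nonneg x)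

lemma Afn_asm (hf : Integrable f (nuM d M)) :
    AEStronglyMeasurable (Afn M ε f) (volume : Measure (EuclideanSpace ℝ (Fin d))) := by
  haveI := kappa_fin M
  have h1 : AEStronglyMeasurable (fun p : EuclideanSpace ℝ (Fin d) × ℝ =>
      p.2 * (wcut (f p) - PiM M (fun w => wcut (f (p.1, w))) p.2)) (nuM d M) :=
    measurable_snd.aestronglyMeasurable.mul ((wf_int hf).1.sub (PiM_asm hf))
  have h2 : AEStronglyMeasurable (fun p : EuclideanSpace ℝ (Fin d) × ℝ =>
      p.2 * PiM M (fun w => wcut (f (p.1, w))) p.2) (nuM d M) :=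
    measurable_snd.aestronglyMeasurable.mul (PiM_asm hf)
  exact h1.integral_prod_right'.sub (h2.integral_prod_right'.const_mul ε)

lemma abs_sub_le' (a b : ℝ) : |a - b| ≤ |a| + |b| := by
  rw [sub_eq_add_neg]
  exact (abs_add_le _ _).trans (by rw [abs_neg])

lemma Lr_int {oneR : ℝ → ℝ} {K : NNReal} (hM : 0 < M)
    (hRlip : LipschitzWith K oneR) (hRrange : ∀ s, oneR s ∈ Set.Icc (0 : ℝ) 1)
    (hf : Integrable f (nuM d M)) :
    Integrable (Lr M ε oneR f) (nuM d M) := by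
  haveI := kappa_fin M
  have hasm : AEStronglyMeasurable (Lr M ε oneR f) (nuM d M) := by
    have hO : AEStronglyMeasurable (fun p : EuclideanSpace ℝ (Fin d) × ℝ =>
        oneR (Afn M ε f p.1)) (nuM d M) :=
      hRlip.continuous.comp_aestronglyMeasurable (Afn_asm hf).comp_fst
    exact ((PiM_asm hf).sub (wf_int hf).1).mul hO
  refine Integrable.mono ((PiM_int hM hf).abs.add (wf_int hf).abs) hasm ?_
  refine Eventually.of_forall fun p => ?_
  rw [Lr_eq]
  have h1 : |oneR (Afn M ε f p.1)| ≤ 1 :=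
    abs_le.2 ⟨by linarith [(hRrange (Afn M ε f p.1)).1], (hRrange (Afn M ε f p.1)).2⟩
  rw [Real.norm_eq_abs, Real.norm_eq_abs, abs_mul]
  have h2 := abs_sub_le' (PiM M (fun w => wcut (f (p.1, w))) p.2) (wcut (f p))
  have h3 : |(|PiM M (fun w => wcut (f (p.1, w))) p.2| + |wcut (f p)|)|
      = |PiM M (fun w => wcut (f (p.1, w))) p.2| + |wcut (f p)| :=
    abs_of_nonneg (by positivity)
  simp only [Pi.add_apply]
  rw [h3]
  calc |PiM M (fun w => wcut (f (p.1, w))) p.2 - wcut (f p)| * |oneR (Afn M ε f p.1)|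
      ≤ |PiM M (fun w => wcut (f (p.1, w))) p.2 - wcut (f p)| * 1 :=
        mul_le_mul_of_nonneg_left h1 (abs_nonneg _)
    _ = |PiM M (fun w => wcut (f (p.1, w))) p.2 - wcut (f p)| := mul_one _
    _ ≤ _ := h2


lemma unit_abs_sub_le_one {a b : ℝ} (ha : a ∈ Icc (0:ℝ) 1) (hb : b ∈ Icc (0:ℝ) 1) :
    |a - b| ≤ 1 := abs_le.2 ⟨by linarith [ha.1, hb.2], by linarith [ha.2, hb.1]⟩

lemma PiM_mem (x : EuclideanSpace ℝ (Fin d)) (v : ℝ) :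
    PiM M (fun w => wcut (f (x, w))) v ∈ Icc (0:ℝ) 1 := by
  rw [PiM_eq]; exact ind_mem _ _

lemma key_x {g : EuclideanSpace ℝ (Fin d) × ℝ → ℝ} (hM : 0 < M) (hε : 0 < ε)
    (hf : Integrable f (nuM d M)) (hg : Integrable g (nuM d M)) :
    ∀ᵐ x ∂(volume : Measure (EuclideanSpace ℝ (Fin d))),
      (∫ v in Set.Icc (0:ℝ) M,
          |PiM M (fun w => wcut (f (x, w))) v - PiM M (fun w => wcut (g (x, w))) v|)
        ≤ (∫ v in Set.Icc (0:ℝ) M, |wcut (f (x, v)) - wcut (g (x, v))|) ∧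
      |Afn M ε f x - Afn M ε g x|
        ≤ M * (2 + ε) * ∫ v in Set.Icc (0:ℝ) M, |wcut (f (x, v)) - wcut (g (x, v))| := by
  haveI := kappa_fin M
  filter_upwards [(wf_int hf).prod_right_ae, (wf_int hg).prod_right_ae] with x hfx hgx
  set κ := (volume : Measure ℝ).restrict (Set.Icc 0 M) with hκ
  set Dx := ∫ v in Set.Icc (0:ℝ) M, |wcut (f (x, v)) - wcut (g (x, v))| with hDxdef
  have hDx0 : 0 ≤ Dx := integral_nonneg fun v => abs_nonneg _
  have hIndf : Integrable (fun v => PiM M (fun w => wcut (f (x, w))) v) κ := by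
    simp only [PiM_eq]
    exact (integrable_const (1:ℝ)).indicator measurableSet_Icc
  have hIndg : Integrable (fun v => PiM M (fun w => wcut (g (x, w))) v) κ := by
    simp only [PiM_eq]
    exact (integrable_const (1:ℝ)).indicator measurableSet_Icc
  have hI : |Ifn M f x - Ifn M g x| ≤ Dx := by
    rw [show Ifn M f x - Ifn M g x
        = ∫ v in Set.Icc (0:ℝ) M, (wcut (f (x, v)) - wcut (g (x, v)))
        from (integral_sub hfx hgx).symm]
    simpa [Real.norm_eq_abs] using norm_integral_le_integral_norm
      (μ := κ) (fun v => wcut (f (x, v)) - wcut (g (x, v)))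
  have hE1 : (∫ v in Set.Icc (0:ℝ) M,
      |PiM M (fun w => wcut (f (x, w))) v - PiM M (fun w => wcut (g (x, w))) v|) ≤ Dx := by
    simp only [PiM_eq]
    exact (ind_int_diff (Ifn_nonneg x) (Ifn_nonneg x)).trans hI
  refine ⟨hE1, ?_⟩
  set E1 := ∫ v in Set.Icc (0:ℝ) M,
      |PiM M (fun w => wcut (f (x, w))) v - PiM M (fun w => wcut (g (x, w))) v| with hE1def
  have hE10 : 0 ≤ E1 := integral_nonneg fun v => abs_nonneg _
  have hvmem : ∀ᵐ v ∂κ, v ∈ Set.Icc (0:ℝ) M := ae_restrict_mem measurableSet_Icc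
  have hint1 : Integrable (fun v => M * |wcut (f (x, v)) - wcut (g (x, v))|) κ := by
    have := ((hfx.sub hgx).abs).const_mul M
    simpa [Pi.sub_apply] using this
  have hint2 : Integrable (fun v => M * |PiM M (fun w => wcut (f (x, w))) v
      - PiM M (fun w => wcut (g (x, w))) v|) κ := by
    have := ((hIndf.sub hIndg).abs).const_mul M
    simpa [Pi.sub_apply] using this
  -- fiber integrability of the four weighted integrands
  have hF1f : Integrable (fun v => v * (wcut (f (x, v))
      - PiM M (fun w => wcut (f (x, w))) v)) κ := by
    refine Integrable.mono' (integrable_const (M * 1))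
      (aestronglyMeasurable_id.mul (hfx.1.sub hIndf.1)) ?_
    filter_upwards [hvmem] with v hv
    rw [Real.norm_eq_abs, abs_mul]
    have h1 : |v| ≤ M := by rw [abs_of_nonneg hv.1]; exact hv.2
    exact mul_le_mul h1 (unit_abs_sub_le_one (wcut_mem_Icc _) (PiM_mem x v))
      (abs_nonneg _) hM.le
  have hF1g : Integrable (fun v => v * (wcut (g (x, v))
      - PiM M (fun w => wcut (g (x, w))) v)) κ := by
    refine Integrable.mono' (integrable_const (M * 1))
      (aestronglyMeasurable_id.mul (hgx.1.sub hIndg.1)) ?_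
    filter_upwards [hvmem] with v hv
    rw [Real.norm_eq_abs, abs_mul]
    have h1 : |v| ≤ M := by rw [abs_of_nonneg hv.1]; exact hv.2
    exact mul_le_mul h1 (unit_abs_sub_le_one (wcut_mem_Icc _) (PiM_mem x v))
      (abs_nonneg _) hM.le
  have hF2f : Integrable (fun v => v * PiM M (fun w => wcut (f (x, w))) v) κ := by
    refine Integrable.mono' (integrable_const (M * 1))
      (aestronglyMeasurable_id.mul hIndf.1) ?_
    filter_upwards [hvmem] with v hv
    rw [Real.norm_eq_abs, abs_mul]
    have h1 : |v| ≤ M := by rw [abs_of_nonneg hv.1]; exact hv.2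
    refine mul_le_mul h1 ?_ (abs_nonneg _) hM.le
    rcases PiM_mem (M := M) (f := f) x v with ⟨ha, hb⟩
    exact abs_le.2 ⟨by linarith, hb⟩
  have hF2g : Integrable (fun v => v * PiM M (fun w => wcut (g (x, w))) v) κ := by
    refine Integrable.mono' (integrable_const (M * 1))
      (aestronglyMeasurable_id.mul hIndg.1) ?_
    filter_upwards [hvmem] with v hv
    rw [Real.norm_eq_abs, abs_mul]
    have h1 : |v| ≤ M := by rw [abs_of_nonneg hv.1]; exact hv.2
    refine mul_le_mul h1 ?_ (abs_nonneg _) hM.le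
    rcases PiM_mem (M := M) (f := g) x v with ⟨ha, hb⟩
    exact abs_le.2 ⟨by linarith, hb⟩
  -- T1 difference bound
  have hT1 : |(∫ v in Set.Icc (0:ℝ) M, v * (wcut (f (x, v))
        - PiM M (fun w => wcut (f (x, w))) v)) -
      ∫ v in Set.Icc (0:ℝ) M, v * (wcut (g (x, v))
        - PiM M (fun w => wcut (g (x, w))) v)| ≤ M * Dx + M * E1 := by
    rw [← integral_sub hF1f hF1g]
    have hnorm := norm_integral_le_integral_norm (μ := κ)
      (fun v => v * (wcut (f (x, v)) - PiM M (fun w => wcut (f (x, w))) v)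
        - v * (wcut (g (x, v)) - PiM M (fun w => wcut (g (x, w))) v))
    refine le_trans (by simpa [Real.norm_eq_abs] using hnorm) ?_
    have hint : Integrable (fun v => M * |wcut (f (x, v)) - wcut (g (x, v))|
        + M * |PiM M (fun w => wcut (f (x, w))) v
          - PiM M (fun w => wcut (g (x, w))) v|) κ := hint1.add hint2
    have hmono : ∫ v in Set.Icc (0:ℝ) M,
        |v * (wcut (f (x, v)) - PiM M (fun w => wcut (f (x, w))) v)
          - v * (wcut (g (x, v)) - PiM M (fun w => wcut (g (x, w))) v)|
        ≤ ∫ v in Set.Icc (0:ℝ) M, (M * |wcut (f (x, v)) - wcut (g (x, v))|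
          + M * |PiM M (fun w => wcut (f (x, w))) v
            - PiM M (fun w => wcut (g (x, w))) v|) := by
      refine integral_mono_of_nonneg (Eventually.of_forall fun v => abs_nonneg _) hint ?_
      filter_upwards [hvmem] with v hv
      have h1 : |v| ≤ M := by rw [abs_of_nonneg hv.1]; exact hv.2
      have key : v * (wcut (f (x, v)) - PiM M (fun w => wcut (f (x, w))) v)
          - v * (wcut (g (x, v)) - PiM M (fun w => wcut (g (x, w))) v)
          = v * ((wcut (f (x, v)) - wcut (g (x, v)))
            - (PiM M (fun w => wcut (f (x, w))) v - PiM M (fun w => wcut (g (x, w))) v)) := by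
        ring
      rw [key, abs_mul]
      calc |v| * |(wcut (f (x, v)) - wcut (g (x, v)))
            - (PiM M (fun w => wcut (f (x, w))) v - PiM M (fun w => wcut (g (x, w))) v)|
          ≤ M * (|wcut (f (x, v)) - wcut (g (x, v))|
            + |PiM M (fun w => wcut (f (x, w))) v - PiM M (fun w => wcut (g (x, w))) v|) := by
            refine mul_le_mul h1 (abs_sub_le' _ _) (abs_nonneg _) hM.le
        _ = M * |wcut (f (x, v)) - wcut (g (x, v))|
            + M * |PiM M (fun w => wcut (f (x, w))) v
              - PiM M (fun w => wcut (g (x, w))) v| := by ring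
    refine hmono.trans ?_
    rw [integral_add hint1 hint2, integral_const_mul, integral_const_mul]
  -- T2 difference bound
  have hT2 : |(∫ v in Set.Icc (0:ℝ) M, v * PiM M (fun w => wcut (f (x, w))) v) -
      ∫ v in Set.Icc (0:ℝ) M, v * PiM M (fun w => wcut (g (x, w))) v| ≤ M * E1 := by
    rw [← integral_sub hF2f hF2g]
    have hnorm := norm_integral_le_integral_norm (μ := κ)
      (fun v => v * PiM M (fun w => wcut (f (x, w))) v
        - v * PiM M (fun w => wcut (g (x, w))) v)
    refine le_trans (by simpa [Real.norm_eq_abs] using hnorm) ?_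
    have hint := hint2
    have hmono : ∫ v in Set.Icc (0:ℝ) M,
        |v * PiM M (fun w => wcut (f (x, w))) v - v * PiM M (fun w => wcut (g (x, w))) v|
        ≤ ∫ v in Set.Icc (0:ℝ) M, M * |PiM M (fun w => wcut (f (x, w))) v
          - PiM M (fun w => wcut (g (x, w))) v| := by
      refine integral_mono_of_nonneg (Eventually.of_forall fun v => abs_nonneg _) hint ?_
      filter_upwards [hvmem] with v hv
      have h1 : |v| ≤ M := by rw [abs_of_nonneg hv.1]; exact hv.2
      rw [← mul_sub, abs_mul]
      exact mul_le_mul_of_nonneg_right h1 (abs_nonneg _)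
    refine hmono.trans ?_
    rw [integral_const_mul]
  -- assemble
  have hsplit : |Afn M ε f x - Afn M ε g x|
      ≤ |(∫ v in Set.Icc (0:ℝ) M, v * (wcut (f (x, v))
          - PiM M (fun w => wcut (f (x, w))) v)) -
        ∫ v in Set.Icc (0:ℝ) M, v * (wcut (g (x, v))
          - PiM M (fun w => wcut (g (x, w))) v)|
        + ε * |(∫ v in Set.Icc (0:ℝ) M, v * PiM M (fun w => wcut (f (x, w))) v) -
          ∫ v in Set.Icc (0:ℝ) M, v * PiM M (fun w => wcut (g (x, w))) v| := by
    unfold Afn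
    set A1 := ∫ v in Set.Icc (0:ℝ) M, v * (wcut (f (x, v))
      - PiM M (fun w => wcut (f (x, w))) v)
    set A2 := ∫ v in Set.Icc (0:ℝ) M, v * (wcut (g (x, v))
      - PiM M (fun w => wcut (g (x, w))) v)
    set B1 := ∫ v in Set.Icc (0:ℝ) M, v * PiM M (fun w => wcut (f (x, w))) v
    set B2 := ∫ v in Set.Icc (0:ℝ) M, v * PiM M (fun w => wcut (g (x, w))) v
    have : A1 - ε * B1 - (A2 - ε * B2) = (A1 - A2) + ε * (B2 - B1) := by ring
    rw [this]
    refine (abs_add_le _ _).trans ?_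
    rw [abs_mul, abs_of_nonneg hε.le, abs_sub_comm B2 B1]
  have hmul : ε * |(∫ v in Set.Icc (0:ℝ) M, v * PiM M (fun w => wcut (f (x, w))) v) -
      ∫ v in Set.Icc (0:ℝ) M, v * PiM M (fun w => wcut (g (x, w))) v| ≤ ε * (M * E1) :=
    mul_le_mul_of_nonneg_left hT2 hε.le
  have hME1 : M * E1 ≤ M * Dx := mul_le_mul_of_nonneg_left hE1 hM.le
  calc |Afn M ε f x - Afn M ε g x|
      ≤ (M * Dx + M * E1) + ε * (M * E1) := le_trans hsplit (add_le_add hT1 hmul)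
    _ ≤ (M * Dx + M * Dx) + ε * (M * Dx) := by
        refine add_le_add (add_le_add le_rfl hME1) (mul_le_mul_of_nonneg_left hME1 hε.le)
    _ = M * (2 + ε) * Dx := by ring

lemma kappa_univ_toReal (hM : 0 ≤ M) :
    ((((volume : Measure ℝ).restrict (Set.Icc 0 M))) Set.univ).toReal = M := by
  rw [Measure.restrict_apply_univ, Real.volume_Icc, ENNReal.toReal_ofReal (by linarith)]
  ring

lemma int_fst {h : EuclideanSpace ℝ (Fin d) → ℝ}
    (hh : Integrable h (volume : Measure (EuclideanSpace ℝ (Fin d)))) :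
    Integrable (fun p : EuclideanSpace ℝ (Fin d) × ℝ => h p.1) (nuM d M) := by
  haveI := kappa_fin M
  refine (integrable_prod_iff hh.1.comp_fst).2 ⟨?_, ?_⟩
  · refine Eventually.of_forall fun x => ?_
    show Integrable (fun _ : ℝ => h x) _
    exact integrable_const _
  · simp only [integral_const]
    have := hh.norm.const_mul (((volume : Measure ℝ).restrict (Set.Icc 0 M)).real Set.univ)
    simpa [Pi.smul_apply, smul_eq_mul] using this


/-- **The regularized collision operator `L^r` is uniformly Lipschitz on
`X = L¹(ℝ^d × [0,M])`.** -/
theorem Lr_lipschitz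
    (d : ℕ) (hd : 1 ≤ d) (M : ℝ) (hM : 0 < M) (ε : ℝ) (hε : 0 < ε) (r : ℝ) (hr : 0 < r)
    (oneR : ℝ → ℝ) (K : NNReal) (hRlip : LipschitzWith K oneR)
    (hR1 : ContDiff ℝ 1 oneR) (hRmono : Monotone oneR)
    (hR0 : ∀ s ≤ (0 : ℝ), oneR s = 0) (hR2 : ∀ s, 2 * r ≤ s → oneR s = 1)
    (hRrange : ∀ s, oneR s ∈ Set.Icc (0 : ℝ) 1) :
    -- `L^r` maps `X` to `X` and is uniformly Lipschitz on `X`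
    ∃ C > (0 : ℝ),
      ∀ f g : EuclideanSpace ℝ (Fin d) × ℝ → ℝ,
        Integrable f (nuM d M) → Integrable g (nuM d M) →
        Integrable (Lr M ε oneR f) (nuM d M) ∧
        (∫ p, |Lr M ε oneR f p - Lr M ε oneR g p| ∂(nuM d M))
          ≤ C * ∫ p, |f p - g p| ∂(nuM d M) := by
  haveI := kappa_fin M
  set cK : ℝ := (K : ℝ) * (M * (2 + ε)) with hcK
  have hcK0 : 0 ≤ cK := by
    refine mul_nonneg K.coe_nonneg (mul_nonneg hM.le (by linarith))
  have hC0 : (0:ℝ) < 2 + cK * M := by nlinarith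
  refine ⟨2 + cK * M, hC0, fun f g hf hg => ?_⟩
  refine ⟨Lr_int hM hRlip hRrange hf, ?_⟩
  set ν := nuM d M with hν
  set μ := (volume : Measure (EuclideanSpace ℝ (Fin d))) with hμ
  have hwf := wf_int hf
  have hwg := wf_int hg
  have hDw : Integrable (fun p => |wcut (f p) - wcut (g p)|) ν := by
    simpa [Pi.sub_apply] using (hwf.sub hwg).abs
  have hDP : Integrable (fun p : EuclideanSpace ℝ (Fin d) × ℝ =>
      |PiM M (fun w => wcut (f (p.1, w))) p.2 - PiM M (fun w => wcut (g (p.1, w))) p.2|) ν := by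
    simpa [Pi.sub_apply] using ((PiM_int hM hf).sub (PiM_int hM hg)).abs
  set Dx : EuclideanSpace ℝ (Fin d) → ℝ :=
    fun x => ∫ v in Set.Icc (0:ℝ) M, |wcut (f (x, v)) - wcut (g (x, v))| with hDxdef
  have hDx_int : Integrable Dx μ := hDw.integral_prod_left
  have hDxfst : Integrable (fun p : EuclideanSpace ℝ (Fin d) × ℝ => Dx p.1) ν :=
    int_fst hDx_int
  have hkey := key_x (f := f) (g := g) hM hε hf hg
  have hkey2 : ∀ᵐ p ∂ν, |Afn M ε f p.1 - Afn M ε g p.1| ≤ M * (2 + ε) * Dx p.1 :=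
    Measure.quasiMeasurePreserving_fst.ae (hkey.mono fun x hx => hx.2)
  -- pointwise bound
  have hpt : ∀ᵐ p ∂ν, |Lr M ε oneR f p - Lr M ε oneR g p|
      ≤ |PiM M (fun w => wcut (f (p.1, w))) p.2 - PiM M (fun w => wcut (g (p.1, w))) p.2|
        + |wcut (f p) - wcut (g p)| + cK * Dx p.1 := by
    filter_upwards [hkey2] with p hp
    rw [Lr_eq, Lr_eq]
    set a := PiM M (fun w => wcut (f (p.1, w))) p.2 - wcut (f p) with hadef
    set a' := PiM M (fun w => wcut (g (p.1, w))) p.2 - wcut (g p) with ha'def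
    set b := oneR (Afn M ε f p.1) with hbdef
    set b' := oneR (Afn M ε g p.1) with hb'def
    have hb : |b| ≤ 1 := by
      rcases hRrange (Afn M ε f p.1) with ⟨h1, h2⟩
      exact abs_le.2 ⟨by rw [hbdef]; linarith, by rw [hbdef]; linarith⟩
    have ha' : |a'| ≤ 1 := unit_abs_sub_le_one (PiM_mem p.1 p.2) (wcut_mem_Icc _)
    have hbb' : |b - b'| ≤ (K : ℝ) * |Afn M ε f p.1 - Afn M ε g p.1| := by
      have := hRlip.dist_le_mul (Afn M ε f p.1) (Afn M ε g p.1)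
      simpa [hbdef, hb'def, Real.dist_eq] using this
    have haa' : |a - a'|
        ≤ |PiM M (fun w => wcut (f (p.1, w))) p.2 - PiM M (fun w => wcut (g (p.1, w))) p.2|
          + |wcut (f p) - wcut (g p)| := by
      have hr : a - a' = (PiM M (fun w => wcut (f (p.1, w))) p.2
          - PiM M (fun w => wcut (g (p.1, w))) p.2) - (wcut (f p) - wcut (g p)) := by
        rw [hadef, ha'def]; ring
      rw [hr]
      exact abs_sub_le' _ _
    have hKA : (K : ℝ) * |Afn M ε f p.1 - Afn M ε g p.1| ≤ cK * Dx p.1 := by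
      have := mul_le_mul_of_nonneg_left hp K.coe_nonneg
      calc (K : ℝ) * |Afn M ε f p.1 - Afn M ε g p.1|
          ≤ (K : ℝ) * (M * (2 + ε) * Dx p.1) := this
        _ = cK * Dx p.1 := by rw [hcK]; ring
    calc |a * b - a' * b'| = |(a - a') * b + a' * (b - b')| := by congr 1; ring
      _ ≤ |(a - a') * b| + |a' * (b - b')| := abs_add_le _ _
      _ = |a - a'| * |b| + |a'| * |b - b'| := by rw [abs_mul, abs_mul]
      _ ≤ |a - a'| * 1 + 1 * ((K : ℝ) * |Afn M ε f p.1 - Afn M ε g p.1|) := by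
          refine add_le_add (mul_le_mul_of_nonneg_left hb (abs_nonneg _)) ?_
          refine mul_le_mul ha' hbb' (abs_nonneg _) zero_le_one
      _ ≤ _ := by
          rw [mul_one, one_mul]
          exact add_le_add haa' hKA
  -- integrate the pointwise bound
  have hH_int : Integrable (fun p : EuclideanSpace ℝ (Fin d) × ℝ =>
      |PiM M (fun w => wcut (f (p.1, w))) p.2 - PiM M (fun w => wcut (g (p.1, w))) p.2|
        + |wcut (f p) - wcut (g p)| + cK * Dx p.1) ν := by
    have := (hDP.add hDw).add (hDxfst.const_mul cK)
    exact this
  have hstep1 : (∫ p, |Lr M ε oneR f p - Lr M ε oneR g p| ∂ν)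
      ≤ ∫ p, (|PiM M (fun w => wcut (f (p.1, w))) p.2
          - PiM M (fun w => wcut (g (p.1, w))) p.2|
        + |wcut (f p) - wcut (g p)| + cK * Dx p.1) ∂ν :=
    integral_mono_of_nonneg (Eventually.of_forall fun p => abs_nonneg _) hH_int hpt
  have hab : Integrable (fun p : EuclideanSpace ℝ (Fin d) × ℝ =>
      |PiM M (fun w => wcut (f (p.1, w))) p.2 - PiM M (fun w => wcut (g (p.1, w))) p.2|
        + |wcut (f p) - wcut (g p)|) ν := by
    exact hDP.add hDw
  have hsplit : ∫ p, (|PiM M (fun w => wcut (f (p.1, w))) p.2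
          - PiM M (fun w => wcut (g (p.1, w))) p.2|
        + |wcut (f p) - wcut (g p)| + cK * Dx p.1) ∂ν
      = (∫ p, |PiM M (fun w => wcut (f (p.1, w))) p.2
          - PiM M (fun w => wcut (g (p.1, w))) p.2| ∂ν)
        + (∫ p, |wcut (f p) - wcut (g p)| ∂ν) + cK * ∫ p, Dx p.1 ∂ν := by
    rw [integral_add hab (hDxfst.const_mul cK), integral_add hDP hDw, integral_const_mul]
  -- the three integrals
  have hI1 : (∫ p, |PiM M (fun w => wcut (f (p.1, w))) p.2
      - PiM M (fun w => wcut (g (p.1, w))) p.2| ∂ν) ≤ ∫ x, Dx x ∂μ := by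
    have heq : ∫ x, (∫ v in Set.Icc (0:ℝ) M, |PiM M (fun w => wcut (f (x, w))) v
        - PiM M (fun w => wcut (g (x, w))) v|) ∂μ
        = ∫ p, |PiM M (fun w => wcut (f (p.1, w))) p.2
          - PiM M (fun w => wcut (g (p.1, w))) p.2| ∂ν := integral_integral hDP
    rw [← heq]
    refine integral_mono_of_nonneg
      (Eventually.of_forall fun x => integral_nonneg fun v => abs_nonneg _) hDx_int ?_
    exact hkey.mono fun x hx => hx.1
  have hI2 : (∫ p, |wcut (f p) - wcut (g p)| ∂ν) = ∫ x, Dx x ∂μ :=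
    (integral_integral (f := fun x v => |wcut (f (x, v)) - wcut (g (x, v))|) hDw).symm
  have hI3 : (∫ p, Dx p.1 ∂ν) = M * ∫ x, Dx x ∂μ := by
    have heq : ∫ x, (∫ _ in Set.Icc (0:ℝ) M, Dx x) ∂μ = ∫ p, Dx p.1 ∂ν :=
      integral_integral (f := fun x _ => Dx x) hDxfst
    rw [← heq]
    have hptc : ∀ x, (∫ _ in Set.Icc (0:ℝ) M, Dx x) = M * Dx x := by
      intro x
      rw [integral_const, measureReal_def, kappa_univ_toReal hM.le, smul_eq_mul]
    simp only [hptc]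
    exact integral_const_mul M _
  have hDx0int : 0 ≤ ∫ x, Dx x ∂μ :=
    integral_nonneg fun x => integral_nonneg fun v => abs_nonneg _
  have hDle : (∫ x, Dx x ∂μ) ≤ ∫ p, |f p - g p| ∂ν := by
    rw [← hI2]
    refine integral_mono_of_nonneg (Eventually.of_forall fun p => abs_nonneg _)
      (by simpa [Pi.sub_apply] using (hf.sub hg).abs)
      (Eventually.of_forall fun p => abs_wcut_sub _ _)
  calc (∫ p, |Lr M ε oneR f p - Lr M ε oneR g p| ∂ν)
      ≤ (∫ p, |PiM M (fun w => wcut (f (p.1, w))) p.2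
          - PiM M (fun w => wcut (g (p.1, w))) p.2| ∂ν)
        + (∫ p, |wcut (f p) - wcut (g p)| ∂ν) + cK * ∫ p, Dx p.1 ∂ν := by
        rw [← hsplit]; exact hstep1
    _ ≤ (∫ x, Dx x ∂μ) + (∫ x, Dx x ∂μ) + cK * (M * ∫ x, Dx x ∂μ) := by
        rw [hI2, hI3]
        exact add_le_add (add_le_add hI1 le_rfl) le_rfl
    _ = (2 + cK * M) * ∫ x, Dx x ∂μ := by ring
    _ ≤ (2 + cK * M) * ∫ p, |f p - g p| ∂ν :=
        mul_le_mul_of_nonneg_left hDle hC0.le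

end
end
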